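/- arXiv:1202.5605 — 2 statements merged into one kernel-verified Lean document; each statement's English description precedes it below -/
import Mathlib

section
/- Let R be a commutative noetherian ring and X a resolving subcategory of mod R. For a finitely generated R-module M, the following are equivalent: (1) M ∈ X; (2) M_p ∈ add X_p for all p ∈ Spec R; (3) M_m ∈ add X_m for all maximal ideals m of R. -/
universe u

open CategoryTheory

namespace ResolvPaper

variable (R : Type u) [CommRing R]

/-- `IsSES f g` means `0 → A → B → C → 0` is a short exact sequence. -/
def IsSES {R : Type u} [CommRing R] {A B C : Type u} [AddCommGroup A] [Module R A]
    [AddCommGroup B] [Module R B] [AddCommGroup C] [Module R C]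
    (f : A →ₗ[R] B) (g : B →ₗ[R] C) : Prop :=
  Function.Injective f ∧ Function.Surjective g ∧ LinearMap.range f = LinearMap.ker g

/-- A resolving subcategory of `mod R`, viewed as a set of bundled modules
closed under isomorphism, containing the finitely generated projective modules, and closed
under direct summands, extensions and syzygies. -/
structure IsResolving (𝒳 : Set (ModuleCat.{u} R)) : Prop where
  fg : ∀ M ∈ 𝒳, Module.Finite R M
  iso_closed : ∀ M N : ModuleCat.{u} R, Nonempty (M ≃ₗ[R] N) → M ∈ 𝒳 → N ∈ 𝒳
  proj_mem : ∀ M : ModuleCat.{u} R, Module.Finite R M → Module.Projective R M → M ∈ 𝒳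
  summand_closed : ∀ M N : ModuleCat.{u} R, ModuleCat.of R (↥M × ↥N) ∈ 𝒳 → M ∈ 𝒳
  ext_closed : ∀ (A B C : ModuleCat.{u} R) (f : A →ₗ[R] B) (g : B →ₗ[R] C),
    IsSES f g → A ∈ 𝒳 → C ∈ 𝒳 → B ∈ 𝒳
  syzygy_closed : ∀ (K P M : ModuleCat.{u} R) (f : K →ₗ[R] P) (g : P →ₗ[R] M),
    IsSES f g → Module.Finite R K → Module.Finite R P → Module.Projective R P →
    M ∈ 𝒳 → K ∈ 𝒳

/-- The resolving closure: the smallest resolving subcategory containing `S`. -/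
def resClosure (S : Set (ModuleCat.{u} R)) : Set (ModuleCat.{u} R) :=
  ⋂₀ {𝒳 | IsResolving R 𝒳 ∧ S ⊆ 𝒳}

/-- An extension-closed subcategory of `mod R`: closed under isomorphism,
direct summands and extensions. -/
def IsExtClosed (𝒳 : Set (ModuleCat.{u} R)) : Prop :=
  (∀ M N : ModuleCat.{u} R, Nonempty (M ≃ₗ[R] N) → M ∈ 𝒳 → N ∈ 𝒳) ∧
  (∀ M N : ModuleCat.{u} R, ModuleCat.of R (↥M × ↥N) ∈ 𝒳 → M ∈ 𝒳) ∧
  (∀ (A B C : ModuleCat.{u} R) (f : A →ₗ[R] B) (g : B →ₗ[R] C),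
    IsSES f g → A ∈ 𝒳 → C ∈ 𝒳 → B ∈ 𝒳)

/-- The extension closure of a set of modules. -/
def extClosure (S : Set (ModuleCat.{u} R)) : Set (ModuleCat.{u} R) :=
  ⋂₀ {𝒳 | IsExtClosed R 𝒳 ∧ S ⊆ 𝒳}

/-- `add R`: direct summands of finite free modules. -/
def addR : Set (ModuleCat.{u} R) :=
  {M | ∃ (n : ℕ) (N : ModuleCat.{u} R), Nonempty ((↥M × ↥N) ≃ₗ[R] (Fin n → R))}

/-- `pdLE n M` : the projective dimension of `M` is at most `n`. -/
def pdLE : ℕ → ModuleCat.{u} R → Prop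
  | 0, M => Module.Projective R M
  | n+1, M => ∃ (K P : ModuleCat.{u} R) (f : K →ₗ[R] P) (g : P →ₗ[R] M),
      Module.Finite R P ∧ Module.Projective R P ∧ IsSES f g ∧ pdLE n K

/-- The projective dimension, an element of `WithBot ℕ∞`; the zero module
has projective dimension `⊥ = -∞`. -/
noncomputable def pdim (M : ModuleCat.{u} R) : WithBot ℕ∞ :=
  sInf {x : WithBot ℕ∞ | (x = ⊥ ∧ Subsingleton M) ∨ ∃ n : ℕ, x = (n : ℕ∞) ∧ pdLE R n M}

/-- The depth of `M` with respect to the ideal `I`: the supremum of lengths of weakly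
`M`-regular sequences contained in `I`.  The zero module has depth `∞`. -/
noncomputable def depthE (I : Ideal R) (M : Type u) [AddCommGroup M] [Module R M] : ℕ∞ :=
  sSup {x : ℕ∞ | ∃ rs : List R, (∀ r ∈ rs, r ∈ I) ∧
    RingTheory.Sequence.IsWeaklyRegular M rs ∧ x = rs.length}

/-- The grade of an ideal: the length of a maximal `R`-regular sequence in `I`. -/
noncomputable def gradeE (I : Ideal R) : ℕ∞ := depthE R I R

/-- A grade consistent function on `Spec R`. -/
def GradeConsistent (f : PrimeSpectrum R → ℕ) : Prop :=
  (∀ p : PrimeSpectrum R, (f p : ℕ∞) ≤ gradeE R p.asIdeal) ∧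
  (∀ p q : PrimeSpectrum R, p.asIdeal ≤ q.asIdeal → f p ≤ f q)

/-- The localization of a module at a prime, as a module over the local ring `R_p`. -/
noncomputable abbrev localizeM (p : PrimeSpectrum R) (M : ModuleCat.{u} R) :
    ModuleCat.{u} (Localization.AtPrime p.asIdeal) :=
  ModuleCat.of (Localization.AtPrime p.asIdeal) (LocalizedModule p.asIdeal.primeCompl M)

/-- `pd_{R_p} M_p`. -/
noncomputable def localPdim (p : PrimeSpectrum R) (M : ModuleCat.{u} R) : WithBot ℕ∞ :=
  pdim (Localization.AtPrime p.asIdeal) (localizeM R p M)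

/-- `depth_{R_p} M_p`. -/
noncomputable def localDepth (p : PrimeSpectrum R) (M : ModuleCat.{u} R) : ℕ∞ :=
  depthE (Localization.AtPrime p.asIdeal)
    (IsLocalRing.maximalIdeal (Localization.AtPrime p.asIdeal))
    (LocalizedModule p.asIdeal.primeCompl M)

/-- The height of a prime ideal. -/
noncomputable def heightE (p : PrimeSpectrum R) : ℕ∞ := Order.height p

/-- `PD(R)` : finitely generated modules of finite projective dimension. -/
def PDcat : Set (ModuleCat.{u} R) :=
  {M | Module.Finite R M ∧ ∃ n : ℕ, pdLE R n M}

/-- `MCM(R)` : maximal Cohen-Macaulay modules. -/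
def MCMcat : Set (ModuleCat.{u} R) :=
  {M | Module.Finite R M ∧ ∀ p : PrimeSpectrum R, heightE R p ≤ localDepth R p M}

/-- The nonfree locus of a module. -/
def NF (M : ModuleCat.{u} R) : Set (PrimeSpectrum R) :=
  {p | ¬ Module.Free (Localization.AtPrime p.asIdeal) (LocalizedModule p.asIdeal.primeCompl M)}

/-- The infinite projective dimension locus of a module. -/
def IPD (M : ModuleCat.{u} R) : Set (PrimeSpectrum R) :=
  {p | localPdim R p M = (⊤ : WithBot ℕ∞)}

/-- The infinite projective dimension locus of a collection of modules. -/
def IPDcat (𝒳 : Set (ModuleCat.{u} R)) : Set (PrimeSpectrum R) :=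
  ⋃ M ∈ 𝒳, IPD R M

/-- The modules in `mod R` whose infinite projective dimension locus lies in `W`. -/
def IPDinv (W : Set (PrimeSpectrum R)) : Set (ModuleCat.{u} R) :=
  {M | Module.Finite R M ∧ IPD R M ⊆ W}

/-- A specialization closed subset of `Spec R`. -/
def SpecClosed (W : Set (PrimeSpectrum R)) : Prop :=
  ∀ p ∈ W, ∀ q : PrimeSpectrum R, p.asIdeal ≤ q.asIdeal → q ∈ W

/-- Membership in `add 𝒳_p`: direct summands of localizations of finite direct sums
of members of `𝒳`. -/
def memAddLocal (𝒳 : Set (ModuleCat.{u} R)) (p : PrimeSpectrum R)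
    (N : ModuleCat.{u} (Localization.AtPrime p.asIdeal)) : Prop :=
  ∃ (n : ℕ) (X : Fin n → ModuleCat.{u} R), (∀ i, X i ∈ 𝒳) ∧
    ∃ (N' : ModuleCat.{u} (Localization.AtPrime p.asIdeal)),
      Nonempty ((↥N × ↥N') ≃ₗ[Localization.AtPrime p.asIdeal]
        ((i : Fin n) → LocalizedModule p.asIdeal.primeCompl (X i)))

/-- `K` is an `n`-th syzygy of `M` computed from a minimal free resolution over the
local ring `S`. -/
def IsMinSyz (S : Type u) [CommRing S] [IsLocalRing S] :
    ℕ → ModuleCat.{u} S → ModuleCat.{u} S → Prop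
  | 0, M, K => Nonempty (K ≃ₗ[S] M)
  | n+1, M, K => ∃ (F : ModuleCat.{u} S) (g : F →ₗ[S] M) (K' : ModuleCat.{u} S)
      (i : K' →ₗ[S] F),
      Module.Finite S F ∧ Module.Free S F ∧ Function.Surjective g ∧
      (LinearMap.ker g ≤ (IsLocalRing.maximalIdeal S) • (⊤ : Submodule S F)) ∧
      Function.Injective i ∧ LinearMap.range i = LinearMap.ker g ∧
      IsMinSyz S n K' K

/-- `K` is an `n`-th syzygy of `M` in some projective resolution (over any ring). -/
def IsSyz : ℕ → ModuleCat.{u} R → ModuleCat.{u} R → Prop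
  | 0, M, K => Nonempty (K ≃ₗ[R] M)
  | n+1, M, K => ∃ (F : ModuleCat.{u} R) (g : F →ₗ[R] M) (K' : ModuleCat.{u} R)
      (i : K' →ₗ[R] F),
      Module.Finite R F ∧ Module.Projective R F ∧ Function.Surjective g ∧
      Function.Injective i ∧ LinearMap.range i = LinearMap.ker g ∧
      IsSyz n K' K

/-- `T` is (isomorphic to) the Auslander transpose of `M`, computed from a minimal
free presentation over the local ring `S`. -/
def IsTranspose (S : Type u) [CommRing S] [IsLocalRing S] (M T : ModuleCat.{u} S) : Prop :=
  ∃ (F1 F0 : ModuleCat.{u} S) (d : F1 →ₗ[S] F0) (e : F0 →ₗ[S] M),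
    Module.Finite S F0 ∧ Module.Free S F0 ∧ Module.Finite S F1 ∧ Module.Free S F1 ∧
    Function.Surjective e ∧ LinearMap.range d = LinearMap.ker e ∧
    LinearMap.ker e ≤ (IsLocalRing.maximalIdeal S) • (⊤ : Submodule S F0) ∧
    LinearMap.ker d ≤ (IsLocalRing.maximalIdeal S) • (⊤ : Submodule S F1) ∧
    Nonempty (T ≃ₗ[S] ((Module.Dual S F1) ⧸ LinearMap.range d.dualMap))

/-- `T` is (isomorphic to) `Tr Ω^n M` over the local ring `S`. -/
def IsTrOmega (S : Type u) [CommRing S] [IsLocalRing S] (n : ℕ) (M T : ModuleCat.{u} S) :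
    Prop :=
  ∃ K : ModuleCat.{u} S, IsMinSyz S n M K ∧ IsTranspose S K T

/-- Resolving subcategory `𝒳` is dominant on `W ⊆ Spec R`. -/
def DominantOn (𝒳 : Set (ModuleCat.{u} R)) (W : Set (PrimeSpectrum R)) : Prop :=
  ∀ p ∈ W, ∃ (n : ℕ) (K : ModuleCat.{u} (Localization.AtPrime p.asIdeal)),
    IsMinSyz (Localization.AtPrime p.asIdeal) n
      (ModuleCat.of (Localization.AtPrime p.asIdeal)
        (IsLocalRing.ResidueField (Localization.AtPrime p.asIdeal))) K ∧
    memAddLocal R 𝒳 p K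

/-- Dominant resolving subcategory. -/
def Dominant (𝒳 : Set (ModuleCat.{u} R)) : Prop := DominantOn R 𝒳 Set.univ

/-- A (noetherian) local ring is Cohen-Macaulay if its depth equals its Krull dimension. -/
def IsCMLocalRing (S : Type u) [CommRing S] [IsLocalRing S] : Prop :=
  IsNoetherianRing S ∧
    ((depthE S (IsLocalRing.maximalIdeal S) S : WithBot ℕ∞) = ringKrullDim S)

/-- A regular local ring: a noetherian local ring whose maximal ideal is generated by
`dim S` elements. -/
def IsRegLocalRing (S : Type u) [CommRing S] [IsLocalRing S] : Prop :=
  IsNoetherianRing S ∧ ∃ s : Finset S,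
    Ideal.span (s : Set S) = IsLocalRing.maximalIdeal S ∧
    ringKrullDim S = (s.card : WithBot ℕ∞)

/-- The singular locus of `R`. -/
def SingLocus : Set (PrimeSpectrum R) :=
  {p | ¬ IsRegLocalRing (Localization.AtPrime p.asIdeal)}

/-- A hypersurface local ring: the completion is a quotient of a regular local ring by
one element. -/
def IsHypersurfaceLocalRing (S : Type u) [CommRing S] [IsLocalRing S] : Prop :=
  ∃ (T : Type u) (_ : CommRing T) (_ : IsLocalRing T) (f : T),
    IsRegLocalRing T ∧
    Nonempty ((AdicCompletion (IsLocalRing.maximalIdeal S) S) ≃+* (T ⧸ Ideal.span {f}))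

/-- A complete intersection local ring: the completion is a quotient of a regular local
ring by a regular sequence. -/
def IsCompleteIntersectionLocalRing (S : Type u) [CommRing S] [IsLocalRing S] : Prop :=
  ∃ (T : Type u) (_ : CommRing T) (_ : IsLocalRing T) (rs : List T),
    IsRegLocalRing T ∧ RingTheory.Sequence.IsRegular T rs ∧
    Nonempty ((AdicCompletion (IsLocalRing.maximalIdeal S) S) ≃+*
      (T ⧸ Ideal.ofList rs))

/-- The subquotient `A / (A ⊓ B)` of two submodules, used for homology. -/
def subquot {S M : Type u} [CommRing S] [AddCommGroup M] [Module S M]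
    (A B : Submodule S M) : Type u :=
  A ⧸ (B.comap A.subtype)

noncomputable instance {S M : Type u} [CommRing S] [AddCommGroup M] [Module S M]
    (A B : Submodule S M) : AddCommGroup (subquot A B) :=
  inferInstanceAs (AddCommGroup (A ⧸ (B.comap A.subtype)))

noncomputable instance {S M : Type u} [CommRing S] [AddCommGroup M] [Module S M]
    (A B : Submodule S M) : Module S (subquot A B) :=
  inferInstanceAs (Module S (A ⧸ (B.comap A.subtype)))

/-- `E` is (isomorphic to) `Ext^{j+1}_S(M, S)`, computed from a finite free resolution. -/
def IsExtPos (S : Type u) [CommRing S] (j : ℕ) (M E : ModuleCat.{u} S) : Prop :=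
  ∃ (F : ℕ → ModuleCat.{u} S) (d : ∀ i : ℕ, (F (i+1) : Type u) →ₗ[S] F i)
    (e : (F 0 : Type u) →ₗ[S] M),
    (∀ i, Module.Finite S (F i)) ∧ (∀ i, Module.Free S (F i)) ∧
    Function.Surjective e ∧ LinearMap.range (d 0) = LinearMap.ker e ∧
    (∀ i, LinearMap.range (d (i+1)) = LinearMap.ker (d i)) ∧
    Nonempty (E ≃ₗ[S]
      subquot (LinearMap.ker ((d (j+1)).dualMap)) (LinearMap.range ((d j).dualMap)))

/-- `T` is (isomorphic to) `Tor_n^S(M, N)`, computed from a projective resolution of `M`. -/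
def IsTor (S : Type u) [CommRing S] (n : ℕ) (M N T : ModuleCat.{u} S) : Prop :=
  ∃ (F : ℕ → ModuleCat.{u} S) (d : ∀ i : ℕ, (F (i+1) : Type u) →ₗ[S] F i)
    (e : (F 0 : Type u) →ₗ[S] M),
    (∀ i, Module.Projective S (F i)) ∧
    Function.Surjective e ∧ LinearMap.range (d 0) = LinearMap.ker e ∧
    (∀ i, LinearMap.range (d (i+1)) = LinearMap.ker (d i)) ∧
    (match n with
      | 0 => Nonempty (T ≃ₗ[S] TensorProduct S M N)
      | (j+1) => Nonempty (T ≃ₗ[S]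
          subquot (LinearMap.ker (LinearMap.rTensor (↥N) (d j)))
            (LinearMap.range (LinearMap.rTensor (↥N) (d (j+1))))))

/-- `idLE n M` : the injective dimension of `M` is at most `n`. -/
def idLE (S : Type u) [CommRing S] : ℕ → ModuleCat.{u} S → Prop
  | 0, M => Module.Injective S M
  | n+1, M => ∃ (I C : ModuleCat.{u} S) (f : M →ₗ[S] I) (g : I →ₗ[S] C),
      IsSES f g ∧ Module.Injective S I ∧ idLE S n C

/-- `PD_0^n(R)` over a local ring: modules of projective dimension at most `n` that are
free on the punctured spectrum. -/
def PD0n [IsLocalRing R] (n : ℕ) : Set (ModuleCat.{u} R) :=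
  {M | Module.Finite R M ∧ pdLE R n M ∧
    ∀ p : PrimeSpectrum R, p.asIdeal ≠ IsLocalRing.maximalIdeal R →
      Module.Free (Localization.AtPrime p.asIdeal) (LocalizedModule p.asIdeal.primeCompl M)}

/-- `PD_0(R)` over a local ring: modules of finite projective dimension that are
free on the punctured spectrum. -/
def PD0 [IsLocalRing R] : Set (ModuleCat.{u} R) :=
  {M | Module.Finite R M ∧ (∃ n : ℕ, pdLE R n M) ∧
    ∀ p : PrimeSpectrum R, p.asIdeal ≠ IsLocalRing.maximalIdeal R →
      Module.Free (Localization.AtPrime p.asIdeal) (LocalizedModule p.asIdeal.primeCompl M)}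

/-- The residue field of a local ring, as a bundled module. -/
noncomputable abbrev residueMod (S : Type u) [CommRing S] [IsLocalRing S] : ModuleCat.{u} S :=
  ModuleCat.of S (IsLocalRing.ResidueField S)



/-! ### Auxiliary lemmas for the proof -/

section Aux

variable {R}

instance locSubsingleton (S : Submonoid R) (A : Type u) [AddCommGroup A] [Module R A]
    [Subsingleton A] : Subsingleton (LocalizedModule S A) := by
  constructor
  intro x y
  induction x using LocalizedModule.induction_on with | _ a s =>
  induction y using LocalizedModule.induction_on with | _ b t =>
  rw [Subsingleton.elim a 0, Subsingleton.elim b 0, LocalizedModule.zero_mk,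
    LocalizedModule.zero_mk]

/-- Any two subsingleton modules are linearly equivalent. -/
noncomputable def subsEquiv (S : Type u) [CommRing S] (A B : Type u) [AddCommGroup A]
    [Module S A] [AddCommGroup B] [Module S B] [Subsingleton A] [Subsingleton B] :
    A ≃ₗ[S] B where
  toFun _ := 0
  invFun _ := 0
  map_add' _ _ := (Subsingleton.elim _ _)
  map_smul' _ _ := (Subsingleton.elim _ _)
  left_inv _ := Subsingleton.elim _ _
  right_inv _ := Subsingleton.elim _ _

/-- `Fin (n+1)` pi module splits off the first factor. -/
def finSuccPiEquiv (S : Type*) [Semiring S] {n : ℕ} (X : Fin (n+1) → Type*)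
    [∀ i, AddCommMonoid (X i)] [∀ i, Module S (X i)] :
    ((i : Fin (n+1)) → X i) ≃ₗ[S] (X 0 × ((i : Fin n) → X i.succ)) where
  toFun v := (v 0, fun i => v i.succ)
  invFun p := Fin.cons p.1 p.2
  map_add' _ _ := rfl
  map_smul' _ _ := rfl
  left_inv v := funext (Fin.cases rfl (fun _ => rfl))
  right_inv p := by ext <;> simp

open LocalizedModule in
/-- Localization is functorial on linear equivs. -/
noncomputable def locMapEquiv (S : Submonoid R) {A B : Type u} [AddCommGroup A] [Module R A]
    [AddCommGroup B] [Module R B] (e : A ≃ₗ[R] B) :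
    LocalizedModule S A ≃ₗ[Localization S] LocalizedModule S B :=
  LinearEquiv.ofLinear (map S e.toLinearMap) (map S e.symm.toLinearMap)
    (by
      apply LinearMap.ext; intro x
      induction x using LocalizedModule.induction_on with | _ b t =>
      simp)
    (by
      apply LinearMap.ext; intro x
      induction x using LocalizedModule.induction_on with | _ a s =>
      simp)

open LocalizedModule in
/-- Localization commutes with binary products. -/
noncomputable def locProdEquiv (S : Submonoid R) (A B : Type u) [AddCommGroup A] [Module R A]
    [AddCommGroup B] [Module R B] :
    LocalizedModule S (A × B) ≃ₗ[Localization S]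
      (LocalizedModule S A × LocalizedModule S B) :=
  LinearEquiv.ofLinear
    (LinearMap.prod (map S (LinearMap.fst R A B)) (map S (LinearMap.snd R A B)))
    (LinearMap.coprod (map S (LinearMap.inl R A B)) (map S (LinearMap.inr R A B)))
    (by
      apply LinearMap.ext; intro x
      obtain ⟨u, v⟩ := x
      induction u using LocalizedModule.induction_on with | _ a s =>
      induction v using LocalizedModule.induction_on with | _ b t =>
      simp only [LinearMap.coprod_apply, LinearMap.prod_apply, LinearMap.coe_comp,
        Function.comp_apply, map_mk, LinearMap.inl_apply, LinearMap.inr_apply, map_add,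
        LinearMap.fst_apply, LinearMap.snd_apply, LinearMap.id_coe, id_eq, Pi.prod,
        LinearMap.comp_apply]
      rw [Prod.mk_add_mk]
      simp [zero_mk])
    (by
      apply LinearMap.ext; intro x
      induction x using LocalizedModule.induction_on with | _ a s =>
      obtain ⟨a₁, a₂⟩ := a
      simp only [LinearMap.coe_comp, Function.comp_apply, LinearMap.prod_apply, Function.prod,
        map_mk, LinearMap.fst_apply, LinearMap.snd_apply, LinearMap.coprod_apply,
        LinearMap.inl_apply, LinearMap.inr_apply, LinearMap.id_coe, id_eq, mk_add_mk]
      rw [mk_eq]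
      exact ⟨1, by simp [smul_smul, mul_comm]⟩)

/-- Localization commutes with finite products. -/
noncomputable def locPiEquiv (S : Submonoid R) : {n : ℕ} → (X : Fin n → Type u) →
    [inst : ∀ i, AddCommGroup (X i)] → [inst2 : ∀ i, Module R (X i)] →
    LocalizedModule S ((i : Fin n) → X i) ≃ₗ[Localization S]
      ((i : Fin n) → LocalizedModule S (X i))
  | 0, _, _, _ => subsEquiv _ _ _
  | (_+1), X, _, _ =>
    (locMapEquiv S (finSuccPiEquiv R X)).trans <|
      ((locProdEquiv S (X 0) _).trans
        ((LinearEquiv.refl _ _).prodCongr (locPiEquiv S (fun i => X i.succ)))).trans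
      (finSuccPiEquiv (Localization S) (fun i => LocalizedModule S (X i))).symm

variable (R)

lemma IsResolving.zero_mem {𝒳 : Set (ModuleCat.{u} R)} (h𝒳 : IsResolving R 𝒳) :
    ModuleCat.of R PUnit ∈ 𝒳 :=
  h𝒳.proj_mem _ inferInstance inferInstance

lemma IsResolving.prod_mem {𝒳 : Set (ModuleCat.{u} R)} (h𝒳 : IsResolving R 𝒳)
    (A B : ModuleCat.{u} R) (hA : A ∈ 𝒳) (hB : B ∈ 𝒳) :
    ModuleCat.of R (↥A × ↥B) ∈ 𝒳 := by
  refine h𝒳.ext_closed A (ModuleCat.of R (↥A × ↥B)) B (LinearMap.inl R ↥A ↥B)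
    (LinearMap.snd R ↥A ↥B) ⟨LinearMap.inl_injective, LinearMap.snd_surjective, ?_⟩ hA hB
  exact LinearMap.range_inl R ↥A ↥B

lemma IsResolving.pi_mem {𝒳 : Set (ModuleCat.{u} R)} (h𝒳 : IsResolving R 𝒳) :
    ∀ (n : ℕ) (X : Fin n → ModuleCat.{u} R), (∀ i, X i ∈ 𝒳) →
      ModuleCat.of R ((i : Fin n) → ↥(X i)) ∈ 𝒳 := by
  intro n
  induction n with
  | zero =>
    intro X _
    exact h𝒳.iso_closed (ModuleCat.of R PUnit) _ ⟨subsEquiv R _ _⟩ (h𝒳.zero_mem R)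
  | succ n ih =>
    intro X hX
    have h1 : ModuleCat.of R ((i : Fin n) → ↥(X i.succ)) ∈ 𝒳 := ih _ (fun i => hX i.succ)
    have h2 := h𝒳.prod_mem R (X 0) (ModuleCat.of R ((i : Fin n) → ↥(X i.succ))) (hX 0) h1
    exact h𝒳.iso_closed _ _ ⟨(finSuccPiEquiv R (fun i => ↥(X i))).symm⟩ h2

/-- A module with a retraction onto it is equivalent to a product with the kernel. -/
noncomputable def retractEquiv {M Y : Type u} [AddCommGroup M] [Module R M]
    [AddCommGroup Y] [Module R Y] (f : M →ₗ[R] Y) (g : Y →ₗ[R] M)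
    (hgf : g ∘ₗ f = LinearMap.id) : Y ≃ₗ[R] (M × LinearMap.ker g) := by
  have hg : ∀ x, g (f x) = x := fun x => LinearMap.congr_fun hgf x
  have hker : ∀ y : Y, ((LinearMap.id - f ∘ₗ g : Y →ₗ[R] Y)) y ∈ LinearMap.ker g := by
    intro y; simp [hg]
  refine LinearEquiv.ofLinear
    (LinearMap.prod g (((LinearMap.id - f ∘ₗ g : Y →ₗ[R] Y)).codRestrict
      (LinearMap.ker g) hker))
    (LinearMap.coprod f (LinearMap.ker g).subtype) ?_ ?_
  · apply LinearMap.ext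
    rintro ⟨m, k, hk⟩
    have hk0 : g k = 0 := hk
    apply Prod.ext
    · simp [hg, hk0]
    · apply Subtype.ext
      simp only [LinearMap.comp_apply, LinearMap.coprod_apply, Submodule.coe_subtype,
        LinearMap.prod_apply, Function.prod, LinearMap.codRestrict_apply, LinearMap.sub_apply,
        LinearMap.id_apply, map_add, hg, hk0, add_zero, LinearMap.id_coe, id_eq,
        Prod.snd_add, Submodule.coe_add, map_zero, smul_zero]
      abel
  · apply LinearMap.ext
    intro y
    simp

/-- The submodule of endomorphisms of `M` factoring through a member of `𝒳`. -/
noncomputable def factorSub {𝒳 : Set (ModuleCat.{u} R)} (h𝒳 : IsResolving R 𝒳)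
    (M : ModuleCat.{u} R) : Submodule R (↥M →ₗ[R] ↥M) where
  carrier := {h | ∃ Y : ModuleCat.{u} R, Y ∈ 𝒳 ∧
    ∃ (f : ↥M →ₗ[R] ↥Y) (g : ↥Y →ₗ[R] ↥M), g ∘ₗ f = h}
  zero_mem' := ⟨ModuleCat.of R PUnit, h𝒳.zero_mem R, 0, 0, by simp⟩
  add_mem' := by
    rintro h₁ h₂ ⟨Y₁, hY₁, f₁, g₁, rfl⟩ ⟨Y₂, hY₂, f₂, g₂, rfl⟩
    refine ⟨ModuleCat.of R (↥Y₁ × ↥Y₂), h𝒳.prod_mem R _ _ hY₁ hY₂,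
      LinearMap.prod f₁ f₂, LinearMap.coprod g₁ g₂, ?_⟩
    rfl
  smul_mem' := by
    rintro c h ⟨Y, hY, f, g, rfl⟩
    exact ⟨Y, hY, f, c • g, by apply LinearMap.ext; intro x; simp⟩

end Aux


section Main

variable {R}

/-- `M × PUnit ≃ M`. -/
def prodPUnitEquiv (S : Type u) [CommRing S] (A : Type u) [AddCommGroup A] [Module S A] :
    (A × PUnit.{u+1}) ≃ₗ[S] A where
  toFun p := p.1
  invFun a := (a, PUnit.unit)
  map_add' _ _ := rfl
  map_smul' _ _ := rfl
  left_inv _ := rfl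
  right_inv _ := rfl

lemma fwd_mem {𝒳 : Set (ModuleCat.{u} R)} (h𝒳 : IsResolving R 𝒳) (M : ModuleCat.{u} R)
    (hMX : M ∈ 𝒳) (p : PrimeSpectrum R) : memAddLocal R 𝒳 p (localizeM R p M) := by
  refine ⟨1, fun _ => M, fun _ => hMX,
    ModuleCat.of (Localization.AtPrime p.asIdeal) PUnit, ⟨?_⟩⟩
  exact (prodPUnitEquiv (Localization.AtPrime p.asIdeal)
      (LocalizedModule p.asIdeal.primeCompl ↥M)).trans
    (LinearEquiv.funUnique (Fin 1) (Localization.AtPrime p.asIdeal)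
      (LocalizedModule p.asIdeal.primeCompl ↥M)).symm

lemma key_mem [IsNoetherianRing R] {𝒳 : Set (ModuleCat.{u} R)} (h𝒳 : IsResolving R 𝒳)
    (M : ModuleCat.{u} R) (hM : Module.Finite R M)
    (h : ∀ p : PrimeSpectrum R, p.asIdeal.IsMaximal →
      memAddLocal R 𝒳 p (localizeM R p M)) :
    M ∈ 𝒳 := by
  haveI : Module.FinitePresentation R ↥M := Module.finitePresentation_of_finite R ↥M
  have hid : LinearMap.id ∈ factorSub R h𝒳 M := by
    refine Submodule.mem_of_localization_maximal _
      (fun P _ ↦ LocalizedModule.map P.primeCompl) _ _ fun P hP ↦ ?_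
    rw [LocalizedModule.map_id]
    obtain ⟨n, X, hX, N', ⟨e⟩⟩ := h ⟨P, hP.isPrime⟩ hP
    set S := P.primeCompl with hS
    haveI : ∀ i, Module.Finite R ↥(X i) := fun i => h𝒳.fg _ (hX i)
    have hYt : ModuleCat.of R ((i : Fin n) → ↥(X i)) ∈ 𝒳 := h𝒳.pi_mem R n X hX
    haveI : Module.FinitePresentation R ((i : Fin n) → ↥(X i)) :=
      Module.finitePresentation_of_finite R _
    let η := locPiEquiv S (fun i => ↥(X i))
    let f' : LocalizedModule S ↥M →ₗ[Localization S]
        LocalizedModule S ((i : Fin n) → ↥(X i)) :=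
      η.symm.toLinearMap ∘ₗ e.toLinearMap ∘ₗ
        LinearMap.inl (Localization S) (LocalizedModule S ↥M) ↥N'
    let g' : LocalizedModule S ((i : Fin n) → ↥(X i)) →ₗ[Localization S]
        LocalizedModule S ↥M :=
      LinearMap.fst (Localization S) (LocalizedModule S ↥M) ↥N' ∘ₗ
        e.symm.toLinearMap ∘ₗ η.toLinearMap
    have hg'f' : ∀ x, g' (f' x) = x := by
      intro x
      simp only [f', g', LinearMap.coe_comp, Function.comp_apply, LinearEquiv.coe_coe,
        LinearEquiv.apply_symm_apply, LinearEquiv.symm_apply_apply, LinearMap.fst_apply,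
        LinearMap.inl_apply]
    obtain ⟨⟨f₀, s⟩, hf₀⟩ := IsLocalizedModule.surj S
      (LocalizedModule.map S (M := ↥M) (N := (i : Fin n) → ↥(X i))) f'
    obtain ⟨⟨g₀, t⟩, hg₀⟩ := IsLocalizedModule.surj S
      (LocalizedModule.map S (M := (i : Fin n) → ↥(X i)) (N := ↥M)) g'
    refine ⟨g₀ ∘ₗ f₀, ⟨ModuleCat.of R ((i : Fin n) → ↥(X i)), hYt, f₀, g₀, rfl⟩, s * t, ?_⟩
    rw [IsLocalizedModule.mk'_eq_iff]
    apply LinearMap.ext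
    intro x
    have h1 : LocalizedModule.map S (g₀ ∘ₗ f₀) x =
        LocalizedModule.map S g₀ (LocalizedModule.map S f₀ x) := by
      induction x using LocalizedModule.induction_on with | _ a u =>
      simp
    have h2 : LocalizedModule.map S f₀ x = s • f' x := by
      rw [← hf₀]; rfl
    have h3 : LocalizedModule.map S g₀ (f' x) = t • g' (f' x) := by
      rw [← hg₀]; rfl
    rw [h1, h2, Submonoid.smul_def, LinearMap.map_smul_of_tower, h3, hg'f']
    simp only [LinearMap.smul_apply, LinearMap.id_apply, Submonoid.smul_def,
      Submonoid.coe_mul, mul_smul]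
  obtain ⟨Y, hY, f, g, hgf⟩ := hid
  have hmem := h𝒳.iso_closed Y
    (ModuleCat.of R (↥M × ↥(ModuleCat.of R (LinearMap.ker g))))
    ⟨retractEquiv R f g hgf⟩ hY
  exact h𝒳.summand_closed M (ModuleCat.of R (LinearMap.ker g)) hmem

end Main

/-- Proposition: membership in a resolving subcategory is a local condition. -/
theorem mem_resolving_local [IsNoetherianRing R]
    (𝒳 : Set (ModuleCat.{u} R)) (h𝒳 : IsResolving R 𝒳)
    (M : ModuleCat.{u} R) (hM : Module.Finite R M) :
    (M ∈ 𝒳 ↔ ∀ p : PrimeSpectrum R, memAddLocal R 𝒳 p (localizeM R p M)) ∧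
    (M ∈ 𝒳 ↔ ∀ p : PrimeSpectrum R, p.asIdeal.IsMaximal →
      memAddLocal R 𝒳 p (localizeM R p M)) := by
  constructor
  · exact ⟨fun h p => fwd_mem h𝒳 M h p,
      fun h => key_mem h𝒳 M hM (fun p hp => h p)⟩
  · exact ⟨fun h p _ => fwd_mem h𝒳 M h p, key_mem h𝒳 M hM⟩

end ResolvPaper
end

section
/- Let R be a commutative noetherian local ring with depth R = t > 0, let L be a nonzero finitely generated R-module of finite length, and let 0 ≤ n < t be an integer. Let ⋯ → F_1 → F_0 → L → 0 be a minimal free resolution of L with differentials d_i. Then the sequence 0 → F_0^* → F_1^* → ⋯ → F_n^* → F_{n+1}^* → Tr Ω^n L → 0 obtained by dualizing (applying Hom_R(−, R)) is exact and gives a minimal free resolution of Tr Ω^n L; consequently Ω^i Tr Ω^n L ≅ Tr Ω^{n-i} L for 0 ≤ i ≤ n, Ω^{n+1} Tr Ω^n L ≅ F_0^*, Ω^i Tr Ω^n L = 0 for i ≥ n+2, and pd_R(Tr Ω^n L) = n + 1. -/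
universe u

open CategoryTheory

namespace ResolvPaper

variable (R : Type u) [CommRing R]

/-! ### Auxiliary lemmas -/

section Aux

variable {R : Type u} [CommRing R]

open IsLocalRing Submodule LinearMap

/-- A short exact sequence with projective quotient splits. -/
lemma aux_split_ses {A X Q : Type u} [AddCommGroup A] [Module R A] [AddCommGroup X]
    [Module R X] [AddCommGroup Q] [Module R Q] [Module.Projective R Q]
    (f : A →ₗ[R] X) (g : X →ₗ[R] Q) (hf : Function.Injective f)
    (hg : Function.Surjective g) (hfg : LinearMap.range f = LinearMap.ker g) :
    Nonempty (X ≃ₗ[R] A × Q) := by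
  obtain ⟨s, hs⟩ := Module.projective_lifting_property g LinearMap.id hg
  have hgs : ∀ q, g (s q) = q := fun q => congrArg (fun h => h q) hs
  let φ : (A × Q) →ₗ[R] X := f ∘ₗ LinearMap.fst R A Q + s ∘ₗ LinearMap.snd R A Q
  have hφ : ∀ p : A × Q, φ p = f p.1 + s p.2 := fun p => rfl
  have hbij : Function.Bijective φ := by
    constructor
    · intro p p' h
      rw [hφ, hφ] at h
      have h2 : g (f p.1 + s p.2) = g (f p'.1 + s p'.2) := by rw [h]
      have hgf : ∀ a, g (f a) = 0 := by
        intro a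
        have : f a ∈ LinearMap.ker g := hfg ▸ LinearMap.mem_range_self f a
        exact this
      simp only [map_add, hgf, hgs, zero_add] at h2
      rw [h2] at h
      exact Prod.ext (hf (add_right_cancel h)) h2
    · intro x
      have hx : x - s (g x) ∈ LinearMap.range f := by
        rw [hfg]
        simp [LinearMap.mem_ker, hgs]
      obtain ⟨a, ha⟩ := hx
      exact ⟨(a, g x), by rw [hφ]; simp [ha]⟩
  exact ⟨(LinearEquiv.ofBijective φ hbij).symm⟩

/-- A short exact sequence whose first map has a retraction splits. -/
lemma aux_split_ses_retr {A X Q : Type u} [AddCommGroup A] [Module R A] [AddCommGroup X]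
    [Module R X] [AddCommGroup Q] [Module R Q]
    (f : A →ₗ[R] X) (g : X →ₗ[R] Q) (r : X →ₗ[R] A)
    (hg : Function.Surjective g) (hfg : LinearMap.range f = LinearMap.ker g)
    (hrf : r ∘ₗ f = LinearMap.id) :
    Nonempty (X ≃ₗ[R] A × Q) := by
  have hrf' : ∀ a, r (f a) = a := fun a => congrArg (fun h => h a) hrf
  have hgf : ∀ a, g (f a) = 0 := by
    intro a
    have : f a ∈ LinearMap.ker g := hfg ▸ LinearMap.mem_range_self f a
    exact this
  let φ : X →ₗ[R] A × Q := (r : X →ₗ[R] A).prod g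
  have hbij : Function.Bijective φ := by
    constructor
    · intro x y h
      have h1 : r x = r y := congrArg Prod.fst h
      have h2 : g x = g y := congrArg Prod.snd h
      have : x - y ∈ LinearMap.ker g := by simp [LinearMap.mem_ker, map_sub, h2]
      rw [← hfg] at this
      obtain ⟨a, ha⟩ := this
      have : a = 0 := by
        have := congrArg r ha
        rw [hrf'] at this
        rw [this]
        simp [map_sub, h1]
      rw [this, map_zero] at ha
      exact sub_eq_zero.mp ha.symm
    · rintro ⟨a, q⟩
      obtain ⟨x0, hx0⟩ := hg q
      refine ⟨x0 + f (a - r x0), ?_⟩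
      have : φ (x0 + f (a - r x0)) = (r x0 + (a - r x0), g x0 + 0) := by
        simp only [φ, LinearMap.prod_apply, Function.prod, map_add, hrf', hgf]
        rfl
      rw [this]
      simp [hx0]
  exact ⟨LinearEquiv.ofBijective φ hbij⟩

lemma aux_ker_equiv_comp {A B : Type u} [AddCommGroup A] [Module R A] [AddCommGroup B]
    [Module R B] {C : Type u} [AddCommGroup C] [Module R C]
    (e : B ≃ₗ[R] C) (g : A →ₗ[R] B) :
    LinearMap.ker (e.toLinearMap ∘ₗ g) = LinearMap.ker g := by
  rw [LinearMap.ker_comp, LinearEquiv.ker, Submodule.comap_bot]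

variable [IsLocalRing R]

/-- Nakayama: a finitely generated submodule contained in `m • itself` is zero. -/
lemma aux_nakayama {M : Type u} [AddCommGroup M] [Module R M]
    (N : Submodule R M) (hfg : N.FG) (h : N ≤ (maximalIdeal R) • N) : N = ⊥ :=
  Submodule.eq_bot_of_le_smul_of_le_jacobson_bot (maximalIdeal R) N hfg h
    (IsLocalRing.maximalIdeal_le_jacobson ⊥)

lemma aux_subsingleton_of_le_smul {M : Type u} [AddCommGroup M] [Module R M]
    [Module.Finite R M] (h : (⊤ : Submodule R M) ≤ (maximalIdeal R) • ⊤) :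
    Subsingleton M := by
  have := aux_nakayama (⊤ : Submodule R M) (Module.Finite.fg_top) h
  constructor
  intro a b
  have ha : a ∈ (⊥ : Submodule R M) := this ▸ Submodule.mem_top
  have hb : b ∈ (⊥ : Submodule R M) := this ▸ Submodule.mem_top
  rw [Submodule.mem_bot] at ha hb
  rw [ha, hb]

/-- If the range of a map together with `m • ⊤` is everything, the map is surjective
(targets a finitely generated module). -/
lemma aux_surj_of_range_sup {M N : Type u} [AddCommGroup M] [Module R M]
    [AddCommGroup N] [Module R N] [Module.Finite R N] (f : M →ₗ[R] N)
    (h : LinearMap.range f ⊔ (maximalIdeal R) • ⊤ = ⊤) : Function.Surjective f := by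
  set Q := N ⧸ LinearMap.range f
  have hq : (⊤ : Submodule R Q) ≤ (maximalIdeal R) • ⊤ := by
    have hmap := congrArg (Submodule.map (LinearMap.range f).mkQ) h
    rw [Submodule.map_sup, Submodule.map_smul'', Submodule.map_top,
      Submodule.range_mkQ] at hmap
    have : Submodule.map (LinearMap.range f).mkQ (LinearMap.range f) = ⊥ := by
      rw [eq_bot_iff]
      rintro x ⟨y, hy, rfl⟩
      simpa [Submodule.mkQ_apply, Submodule.Quotient.mk_eq_zero] using hy
    rw [this, bot_sup_eq] at hmap
    exact le_of_eq hmap.symm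
  have : Subsingleton Q := aux_subsingleton_of_le_smul hq
  intro y
  have h0 : Submodule.Quotient.mk y = (0 : Q) := Subsingleton.elim _ _
  exact (Submodule.Quotient.mk_eq_zero (LinearMap.range f)).mp h0

/-- Comparison of two minimal covers. -/
lemma aux_cover_compare {F F' M : Type u} [AddCommGroup F] [Module R F]
    [AddCommGroup F'] [Module R F'] [AddCommGroup M] [Module R M]
    [Module.Finite R F] [Module.Finite R F'] [Module.Projective R F]
    [Module.Projective R F']
    (g : F →ₗ[R] M) (g' : F' →ₗ[R] M) (hg : Function.Surjective g)
    (hg' : Function.Surjective g')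
    (hk : LinearMap.ker g ≤ (maximalIdeal R) • ⊤)
    (hk' : LinearMap.ker g' ≤ (maximalIdeal R) • ⊤) :
    ∃ φ : F ≃ₗ[R] F', g' ∘ₗ (φ : F →ₗ[R] F') = g := by
  obtain ⟨φ, hφ⟩ := Module.projective_lifting_property g' g hg'
  obtain ⟨ψ, hψ⟩ := Module.projective_lifting_property g g' hg
  have happ : ∀ x, g' (φ x) = g x := fun x => congrArg (fun h => h x) hφ
  have happ' : ∀ x, g (ψ x) = g' x := fun x => congrArg (fun h => h x) hψ
  have hsurj : ∀ {A B : Type u} [AddCommGroup A] [Module R A] [AddCommGroup B]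
      [Module R B] [Module.Finite R B] (α : A →ₗ[R] B) (β : B →ₗ[R] M)
      (γ : A →ₗ[R] M), Function.Surjective γ → LinearMap.ker β ≤ (maximalIdeal R) • ⊤ →
      (∀ x, β (α x) = γ x) → Function.Surjective α := by
    intro A B _ _ _ _ _ α β γ hγ hkβ hc
    apply aux_surj_of_range_sup
    rw [eq_top_iff]
    intro y _
    obtain ⟨x, hx⟩ := hγ (β y)
    have : y - α x ∈ LinearMap.ker β := by
      simp [LinearMap.mem_ker, map_sub, hc, hx]
    have hmem : y - α x ∈ (maximalIdeal R) • (⊤ : Submodule R B) := hkβ this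
    have hy : y = α x + (y - α x) := by abel
    rw [hy]
    exact Submodule.add_mem_sup (LinearMap.mem_range_self α x) hmem
  have hφs : Function.Surjective φ := hsurj φ g' g hg hk' happ
  have hψs : Function.Surjective ψ := hsurj ψ g g' hg' hk happ'
  have hφψ : Function.Surjective (φ ∘ₗ ψ) := hφs.comp hψs
  have hψφ : Function.Surjective (ψ ∘ₗ φ) := hψs.comp hφs
  have h1 : Function.Injective (φ ∘ₗ ψ) :=
    OrzechProperty.injective_of_surjective_endomorphism _ hφψ
  have h2 : Function.Injective (ψ ∘ₗ φ) :=
    OrzechProperty.injective_of_surjective_endomorphism _ hψφ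
  have hφi : Function.Injective φ := by
    intro x y h
    exact (fun hxy => hxy) (h2 (by simp [LinearMap.comp_apply, h]))
  exact ⟨LinearEquiv.ofBijective φ ⟨hφi, hφs⟩, hφ⟩

end Aux

section Syz

variable {R : Type u} [CommRing R] [IsLocalRing R]

open IsLocalRing Submodule LinearMap

lemma IsMinSyz_congr_left {j : ℕ} {M M' K : ModuleCat.{u} R}
    (e : ↥M ≃ₗ[R] ↥M') (h : IsMinSyz R j M K) : IsMinSyz R j M' K := by
  induction j generalizing M M' with
  | zero => obtain ⟨e'⟩ := h; exact ⟨e'.trans e⟩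
  | succ j ih =>
    obtain ⟨F, g, K', i, h1, h2, h3, h4, h5, h6, h7⟩ := h
    refine ⟨F, e.toLinearMap ∘ₗ g, K', i, h1, h2, e.surjective.comp h3, ?_, h5, ?_, h7⟩
    · rw [aux_ker_equiv_comp e g]; exact h4
    · rw [aux_ker_equiv_comp e g]; exact h6

lemma IsMinSyz_congr_right {j : ℕ} {M K K' : ModuleCat.{u} R}
    (e : ↥K ≃ₗ[R] ↥K') (h : IsMinSyz R j M K) : IsMinSyz R j M K' := by
  induction j generalizing M K K' with
  | zero => obtain ⟨e'⟩ := h; exact ⟨e.symm.trans e'⟩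
  | succ j ih =>
    obtain ⟨F, g, K1, i, h1, h2, h3, h4, h5, h6, h7⟩ := h
    exact ⟨F, g, K1, i, h1, h2, h3, h4, h5, h6, ih e h7⟩

lemma IsMinSyz_concat {a : ℕ} : ∀ {b : ℕ} {M K1 K : ModuleCat.{u} R},
    IsMinSyz R a M K1 → IsMinSyz R b K1 K → IsMinSyz R (a + b) M K := by
  induction a with
  | zero =>
    intro b M K1 K h1 h2
    obtain ⟨e⟩ := h1
    rw [Nat.zero_add]
    exact IsMinSyz_congr_left e h2
  | succ a ih =>
    intro b M K1 K h1 h2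
    obtain ⟨F, g, K', i, p1, p2, p3, p4, p5, p6, p7⟩ := h1
    have : a + 1 + b = (a + b) + 1 := by omega
    rw [this]
    exact ⟨F, g, K', i, p1, p2, p3, p4, p5, p6, ih p7 h2⟩

lemma IsMinSyz_decomp {a : ℕ} : ∀ {b : ℕ} {M K : ModuleCat.{u} R},
    IsMinSyz R (a + b) M K → ∃ Km : ModuleCat.{u} R,
      IsMinSyz R a M Km ∧ IsMinSyz R b Km K := by
  induction a with
  | zero =>
    intro b M K h
    rw [Nat.zero_add] at h
    exact ⟨M, ⟨LinearEquiv.refl R _⟩, h⟩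
  | succ a ih =>
    intro b M K h
    have heq : a + 1 + b = (a + b) + 1 := by omega
    rw [heq] at h
    obtain ⟨F, g, K', i, p1, p2, p3, p4, p5, p6, p7⟩ := h
    obtain ⟨Km, q1, q2⟩ := ih p7
    exact ⟨Km, ⟨F, g, K', i, p1, p2, p3, p4, p5, p6, q1⟩, q2⟩

lemma IsMinSyz_subsingleton {j : ℕ} {M K : ModuleCat.{u} R}
    (hM : Subsingleton ↥M) (h : IsMinSyz R j M K) : Subsingleton ↥K := by
  induction j generalizing M K with
  | zero => obtain ⟨e⟩ := h; exact Equiv.subsingleton e.toEquiv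
  | succ j ih =>
    obtain ⟨F, g, K', i, p1, p2, p3, p4, p5, p6, p7⟩ := h
    haveI := p1
    have hkg : LinearMap.ker g = ⊤ := by
      rw [eq_top_iff]
      intro x _
      exact Subsingleton.elim (g x) 0
    rw [hkg] at p4
    have hF : Subsingleton ↥F := aux_subsingleton_of_le_smul (R := R) (M := ↥F) p4
    have hK' : Subsingleton ↥K' := by
      constructor
      intro a b
      exact p5 (Subsingleton.elim (i a) (i b))
    exact ih hK' p7

lemma IsMinSyz_unique {j : ℕ} : ∀ {M K K' : ModuleCat.{u} R},
    IsMinSyz R j M K → IsMinSyz R j M K' → Nonempty (↥K ≃ₗ[R] ↥K') := by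
  induction j with
  | zero =>
    intro M K K' h h'
    obtain ⟨e⟩ := h; obtain ⟨e'⟩ := h'
    exact ⟨e.trans e'.symm⟩
  | succ j ih =>
    intro M K K' h h'
    obtain ⟨F, g, K1, i1, p1, p2, p3, p4, p5, p6, p7⟩ := h
    obtain ⟨F', g', K1', i1', q1, q2, q3, q4, q5, q6, q7⟩ := h'
    haveI := p1; haveI := p2; haveI := q1; haveI := q2
    obtain ⟨φ, hφ⟩ := aux_cover_compare g g' p3 q3 p4 q4
    have happ : ∀ y : ↥F, g' ((φ : ↥F →ₗ[R] ↥F') y) = g y := fun y => by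
      rw [← LinearMap.comp_apply, hφ]
    have hmap : Submodule.map (φ : ↥F →ₗ[R] ↥F') (LinearMap.ker g) = LinearMap.ker g' := by
      ext y
      constructor
      · rintro ⟨x, hx, rfl⟩
        have hx0 : g x = 0 := hx
        have : g' ((φ : ↥F →ₗ[R] ↥F') x) = 0 := by rw [happ x, hx0]
        exact this
      · intro hy
        obtain ⟨x, hxy⟩ := φ.surjective y
        refine ⟨x, ?_, hxy⟩
        have hy0 : g' y = 0 := hy
        have : g x = 0 := by
          rw [← happ x]
          show g' (φ x) = 0
          rw [hxy, hy0]
        exact this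
    have e1 : ↥K1 ≃ₗ[R] ↥(LinearMap.ker g) :=
      (LinearEquiv.ofInjective i1 p5).trans (LinearEquiv.ofEq _ _ p6)
    have e2 : ↥(LinearMap.ker g) ≃ₗ[R] ↥(LinearMap.ker g') :=
      (φ.submoduleMap (LinearMap.ker g)).trans (LinearEquiv.ofEq _ _ hmap)
    have e3 : ↥K1' ≃ₗ[R] ↥(LinearMap.ker g') :=
      (LinearEquiv.ofInjective i1' q5).trans (LinearEquiv.ofEq _ _ q6)
    have p7' : IsMinSyz R j K1' K :=
      IsMinSyz_congr_left (e1.trans (e2.trans e3.symm)) p7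
    exact ih p7' q7

end Syz

section PD

variable {R : Type u} [CommRing R]

open IsLocalRing Submodule LinearMap

lemma aux_projective_prod {A B : Type u} [AddCommGroup A] [Module R A] [AddCommGroup B]
    [Module R B] (hA : Module.Projective R A) (hB : Module.Projective R B) :
    Module.Projective R (A × B) := by
  obtain ⟨sA, hsA⟩ := hA.out
  obtain ⟨sB, hsB⟩ := hB.out
  refine ⟨⟨Finsupp.lmapDomain R R (⇑(LinearMap.inl R A B)) ∘ₗ sA ∘ₗ LinearMap.fst R A B
    + Finsupp.lmapDomain R R (⇑(LinearMap.inr R A B)) ∘ₗ sB ∘ₗ LinearMap.snd R A B, ?_⟩⟩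
  rintro ⟨a, b⟩
  simp only [LinearMap.add_apply, LinearMap.comp_apply, Finsupp.lmapDomain_apply,
    LinearMap.fst_apply, LinearMap.snd_apply, map_add]
  rw [Finsupp.linearCombination_mapDomain, Finsupp.linearCombination_mapDomain]
  have h1 : (id ∘ ⇑(LinearMap.inl R A B)) = ⇑(LinearMap.inl R A B) ∘ id := rfl
  have h2 : (id ∘ ⇑(LinearMap.inr R A B)) = ⇑(LinearMap.inr R A B) ∘ id := rfl
  rw [h1, h2, ← Finsupp.apply_linearCombination, ← Finsupp.apply_linearCombination,
    hsA a, hsB b]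
  simp

lemma pdLE_congr {a : ℕ} {M M' : ModuleCat.{u} R} (e : ↥M ≃ₗ[R] ↥M')
    (h : pdLE R a M) : pdLE R a M' := by
  induction a generalizing M M' with
  | zero =>
    haveI : Module.Projective R ↥M := h
    exact Module.Projective.of_equiv e
  | succ a ih =>
    obtain ⟨K, P, f, g, h1, h2, ⟨s1, s2, s3⟩, h4⟩ := h
    exact ⟨K, P, f, e.toLinearMap ∘ₗ g, h1, h2,
      ⟨s1, e.surjective.comp s2, by rw [aux_ker_equiv_comp e g]; exact s3⟩, h4⟩

lemma pdLE_prod {a : ℕ} {M Q : ModuleCat.{u} R} (hQf : Module.Finite R ↥Q)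
    (hQp : Module.Projective R ↥Q) (h : pdLE R a M) :
    pdLE R a (ModuleCat.of R (↥M × ↥Q)) := by
  induction a generalizing M with
  | zero => exact aux_projective_prod h hQp
  | succ a ih =>
    obtain ⟨K, P, f, g, h1, h2, ⟨s1, s2, s3⟩, h4⟩ := h
    haveI := h1
    refine ⟨K, ModuleCat.of R (↥P × ↥Q), (LinearMap.inl R ↥P ↥Q) ∘ₗ f,
      g.prodMap LinearMap.id, Module.Finite.prod, aux_projective_prod h2 hQp,
      ⟨?_, ?_, ?_⟩, h4⟩
    · intro x y hxy
      exact s1 (congrArg Prod.fst hxy)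
    · intro p
      obtain ⟨x, hx⟩ := s2 p.1
      exact ⟨(x, p.2), Prod.ext hx rfl⟩
    · apply le_antisymm
      · rintro _ ⟨x, rfl⟩
        have hfx : g (f x) = 0 := by
          have : f x ∈ LinearMap.ker g := s3 ▸ LinearMap.mem_range_self f x
          exact this
        have hval : (g.prodMap LinearMap.id) ((LinearMap.inl R ↥P ↥Q ∘ₗ f) x)
            = (g (f x), (0 : ↥Q)) := rfl
        show (g.prodMap LinearMap.id) ((LinearMap.inl R ↥P ↥Q ∘ₗ f) x) = 0
        rw [hval, hfx]
        rfl
      · rintro ⟨p, q⟩ hpq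
        have hpq' : (g p, q) = ((0 : ↥M), (0 : ↥Q)) := hpq
        have hp : p ∈ LinearMap.range f := by
          rw [s3]
          exact LinearMap.mem_ker.mpr (congrArg Prod.fst hpq')
        obtain ⟨x, hx⟩ := hp
        exact ⟨x, Prod.ext hx (congrArg Prod.snd hpq').symm⟩

lemma pdLE_dropProj {a : ℕ} {A Q : ModuleCat.{u} R} (hQf : Module.Finite R ↥Q)
    (hQp : Module.Projective R ↥Q) (h : pdLE R a (ModuleCat.of R (↥A × ↥Q))) :
    pdLE R a A := by
  cases a with
  | zero =>
    haveI : Module.Projective R (↥A × ↥Q) := h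
    exact Module.Projective.of_split (LinearMap.inl R ↥A ↥Q) (LinearMap.fst R ↥A ↥Q)
      (by ext x; simp)
  | succ a =>
    obtain ⟨K, P, f, g, h1, h2, ⟨s1, s2, s3⟩, h4⟩ := h
    have hgf : ∀ x, g (f x) = 0 := by
      intro x
      have : f x ∈ LinearMap.ker g := s3 ▸ LinearMap.mem_range_self f x
      exact this
    let q1 : ↥P →ₗ[R] ↥A := (LinearMap.fst R ↥A ↥Q) ∘ₗ g
    have hq1app : ∀ x, q1 x = (g x).1 := fun x => rfl
    have hq1s : Function.Surjective q1 := by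
      intro x
      obtain ⟨p, hp⟩ := s2 ((x, 0) : ↥A × ↥Q)
      exact ⟨p, by rw [hq1app, hp]⟩
    have hfN : ∀ x, f x ∈ LinearMap.ker q1 := by
      intro x
      rw [LinearMap.mem_ker, hq1app, hgf]
      rfl
    let f' : ↥K →ₗ[R] ↥(LinearMap.ker q1) := f.codRestrict (LinearMap.ker q1) hfN
    let gQ : ↥(LinearMap.ker q1) →ₗ[R] ↥Q :=
      (LinearMap.snd R ↥A ↥Q) ∘ₗ g ∘ₗ (LinearMap.ker q1).subtype
    have hgQapp : ∀ x : ↥(LinearMap.ker q1), gQ x = (g x.1).2 := fun x => rfl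
    have hsplit : Nonempty (↥(LinearMap.ker q1) ≃ₗ[R] ↥K × ↥Q) := by
      haveI := hQp
      apply aux_split_ses f' gQ
      · intro x y hxy
        exact s1 (congrArg Subtype.val hxy)
      · intro qq
        obtain ⟨p, hp⟩ := s2 ((0, qq) : ↥A × ↥Q)
        have hpN : p ∈ LinearMap.ker q1 := by rw [LinearMap.mem_ker, hq1app, hp]
        refine ⟨⟨p, hpN⟩, ?_⟩
        rw [hgQapp]
        show (g p).2 = qq
        rw [hp]
      · apply le_antisymm
        · rintro _ ⟨k, rfl⟩
          rw [LinearMap.mem_ker, hgQapp]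
          show (g (f k)).2 = 0
          rw [hgf]
          rfl
        · rintro ⟨x, hx⟩ hmem
          have hsnd : (g x).2 = 0 := by
            have := LinearMap.mem_ker.mp hmem
            rwa [hgQapp] at this
          have hfst : (g x).1 = 0 := LinearMap.mem_ker.mp hx
          have hg0 : g x = 0 := by
            rw [← Prod.mk.eta (p := g x), Prod.mk_eq_zero]
            exact ⟨hfst, hsnd⟩
          have : x ∈ LinearMap.range f := by rw [s3]; exact hg0
          obtain ⟨k, hk⟩ := this
          exact ⟨k, Subtype.ext hk⟩
    obtain ⟨E⟩ := hsplit
    have hKQ : pdLE R a (ModuleCat.of R (↥K × ↥Q)) := pdLE_prod hQf hQp h4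
    have hNa : pdLE R a (ModuleCat.of R ↥(LinearMap.ker q1)) := pdLE_congr E.symm hKQ
    exact ⟨ModuleCat.of R ↥(LinearMap.ker q1), P, (LinearMap.ker q1).subtype, q1, h1, h2,
      ⟨(LinearMap.ker q1).injective_subtype, hq1s, Submodule.range_subtype _⟩, hNa⟩

variable [IsLocalRing R] [IsNoetherianRing R]

/-- Minimal first syzygy of a projective module is trivial. -/
lemma aux_minsyz_one_proj {M K : ModuleCat.{u} R} (hM : Module.Projective R ↥M)
    (h : IsMinSyz R 1 M K) : Subsingleton ↥K := by
  obtain ⟨F, g, K', i, p1, p2, p3, p4, p5, p6, p7⟩ := h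
  haveI := p1
  obtain ⟨s, hs⟩ := Module.projective_lifting_property g LinearMap.id p3
  have hgs : ∀ x, g (s x) = x := fun x => congrArg (fun h => h x) hs
  set r : ↥F →ₗ[R] ↥F := LinearMap.id - s ∘ₗ g with hr
  have hrk : ∀ x ∈ LinearMap.ker g, r x = x := by
    intro x hx
    have : g x = 0 := hx
    simp [hr, this]
  have hrange : LinearMap.range r ≤ LinearMap.ker g := by
    rintro _ ⟨x, rfl⟩
    simp [hr, LinearMap.mem_ker, hgs]
  have hsub : LinearMap.ker g ≤ (maximalIdeal R) • (LinearMap.ker g) := by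
    intro x hx
    have h1 : x ∈ Submodule.map r ((maximalIdeal R) • (⊤ : Submodule R ↥F)) := by
      rw [← hrk x hx]
      exact Submodule.mem_map_of_mem (p4 hx)
    rw [Submodule.map_smul'', Submodule.map_top] at h1
    exact Submodule.smul_mono le_rfl hrange h1
  have hker : LinearMap.ker g = ⊥ := by
    haveI : IsNoetherian R ↥F := isNoetherian_of_isNoetherianRing_of_finite R ↥F
    exact aux_nakayama _ (IsNoetherian.noetherian _) hsub
  have hK' : Subsingleton ↥K' := by
    constructor
    intro a b
    apply p5
    have ha : i a ∈ LinearMap.ker g := p6 ▸ LinearMap.mem_range_self i a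
    have hb : i b ∈ LinearMap.ker g := p6 ▸ LinearMap.mem_range_self i b
    rw [hker] at ha hb
    rw [Submodule.mem_bot] at ha hb
    rw [ha, hb]
  obtain ⟨e⟩ := p7
  exact Equiv.subsingleton e.toEquiv

/-- A minimal syzygy of a module of finite projective dimension is projective. -/
lemma aux_pdmin {a : ℕ} : ∀ {M K : ModuleCat.{u} R},
    pdLE R a M → IsMinSyz R a M K → Module.Projective R ↥K := by
  induction a with
  | zero =>
    intro M K h hm
    obtain ⟨e⟩ := hm
    haveI : Module.Projective R ↥M := h
    exact Module.Projective.of_equiv e.symm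
  | succ a ih =>
    intro M K h hm
    obtain ⟨K1, P, f, g, h1, h2, ⟨s1, s2, s3⟩, h4⟩ := h
    obtain ⟨F', g', K1', i', q1, q2, q3, q4, q5, q6, q7⟩ := hm
    haveI := h1; haveI := h2; haveI := q1; haveI := q2
    -- lift φ : P → F' with g' ∘ φ = g
    obtain ⟨φ, hφ⟩ := Module.projective_lifting_property g' g q3
    have happ : ∀ x, g' (φ x) = g x := fun x => congrArg (fun h => h x) hφ
    have hφs : Function.Surjective φ := by
      apply aux_surj_of_range_sup
      rw [eq_top_iff]
      intro y _
      obtain ⟨x, hx⟩ := s2 (g' y)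
      have hmem : y - φ x ∈ LinearMap.ker g' := by
        simp [LinearMap.mem_ker, map_sub, happ, hx]
      have hy : y = φ x + (y - φ x) := by abel
      rw [hy]
      exact Submodule.add_mem_sup (LinearMap.mem_range_self φ x) (q4 hmem)
    -- section of φ
    obtain ⟨sφ, hsφ⟩ := Module.projective_lifting_property φ LinearMap.id hφs
    have hsφa : ∀ x, φ (sφ x) = x := fun x => congrArg (fun h => h x) hsφ
    -- ker φ ⊆ ker g
    have hkk : LinearMap.ker φ ≤ LinearMap.ker g := by
      intro x hx
      have hx0 : φ x = 0 := hx
      have : g x = g' (φ x) := (happ x).symm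
      simp [LinearMap.mem_ker, this, hx0]
    -- restriction of φ to kernels is surjective onto ker g'
    have hkres : ∀ y ∈ LinearMap.ker g', ∃ x ∈ LinearMap.ker g, φ x = y := by
      intro y hy
      obtain ⟨x, hx⟩ := hφs y
      refine ⟨x, ?_, hx⟩
      have : g x = g' (φ x) := (happ x).symm
      have hy0 : g' y = 0 := hy
      simp [LinearMap.mem_ker, this, hx, hy0]
    -- ker g ≃ ker φ × ker g'
    have hker_split : Nonempty (↥(LinearMap.ker g) ≃ₗ[R] ↥(LinearMap.ker φ) × ↥(LinearMap.ker g')) := by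
      let ι : ↥(LinearMap.ker φ) →ₗ[R] ↥(LinearMap.ker g) :=
        ((LinearMap.ker φ).subtype).codRestrict (LinearMap.ker g) (fun x => hkk x.2)
      have hιapp : ∀ x : ↥(LinearMap.ker φ), ((ι x : ↥(LinearMap.ker g)) : ↥P) = (x : ↥P) :=
        fun x => rfl
      have hγmem : ∀ x ∈ LinearMap.ker g, φ x ∈ LinearMap.ker g' := by
        intro x hx
        have h1 : g' (φ x) = g x := happ x
        have hx0 : g x = 0 := hx
        rw [LinearMap.mem_ker, h1]
        exact hx0
      let γ : ↥(LinearMap.ker g) →ₗ[R] ↥(LinearMap.ker g') :=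
        φ.restrict (p := LinearMap.ker g) (q := LinearMap.ker g') hγmem
      have hγapp : ∀ x : ↥(LinearMap.ker g), ((γ x : ↥(LinearMap.ker g')) : ↥F') = φ (x : ↥P) :=
        fun x => rfl
      have hρmem : ∀ x : ↥(LinearMap.ker g),
          ((LinearMap.id - sφ ∘ₗ φ) ∘ₗ (LinearMap.ker g).subtype) x ∈ LinearMap.ker φ := by
        intro x
        rw [LinearMap.mem_ker]
        show φ ((x : ↥P) - sφ (φ (x : ↥P))) = 0
        rw [map_sub, hsφa, sub_self]
      let ρ : ↥(LinearMap.ker g) →ₗ[R] ↥(LinearMap.ker φ) :=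
        (((LinearMap.id - sφ ∘ₗ φ)) ∘ₗ (LinearMap.ker g).subtype).codRestrict
          (LinearMap.ker φ) hρmem
      apply aux_split_ses_retr ι γ ρ
      · rintro ⟨y, hy⟩
        obtain ⟨x, hx, hφx⟩ := hkres y hy
        exact ⟨⟨x, hx⟩, Subtype.ext hφx⟩
      · apply le_antisymm
        · rintro _ ⟨⟨z, hz⟩, rfl⟩
          rw [LinearMap.mem_ker]
          apply Subtype.ext
          rw [hγapp, hιapp]
          exact hz
        · rintro ⟨x, hx⟩ hmem
          have hφx : φ x = 0 := by
            have := congrArg Subtype.val (LinearMap.mem_ker.mp hmem)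
            rwa [hγapp] at this
          exact ⟨⟨x, hφx⟩, Subtype.ext rfl⟩
      · apply LinearMap.ext
        rintro ⟨x, hx⟩
        apply Subtype.ext
        have hφx : φ x = 0 := hx
        show (x : ↥P) - sφ (φ x) = x
        rw [hφx, map_zero, sub_zero]
    obtain ⟨Eker⟩ := hker_split
    -- ker φ is finite and projective
    have hkφproj : Module.Projective R ↥(LinearMap.ker φ) := by
      have hmem0 : ∀ x : ↥P, ((LinearMap.id : ↥P →ₗ[R] ↥P) - sφ ∘ₗ φ) x ∈ LinearMap.ker φ := by
        intro x
        rw [LinearMap.mem_ker]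
        show φ (x - sφ (φ x)) = 0
        rw [map_sub, hsφa, sub_self]
      apply Module.Projective.of_split (M := ↥P) (LinearMap.ker φ).subtype
        ((((LinearMap.id : ↥P →ₗ[R] ↥P) - sφ ∘ₗ φ)).codRestrict (LinearMap.ker φ) hmem0)
      apply LinearMap.ext
      rintro ⟨x, hx⟩
      apply Subtype.ext
      have hφx : φ x = 0 := hx
      show (x : ↥P) - sφ (φ x) = x
      rw [hφx, map_zero, sub_zero]
    have hkφfin : Module.Finite R ↥(LinearMap.ker φ) := by
      haveI : IsNoetherian R ↥P := isNoetherian_of_isNoetherianRing_of_finite R ↥P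
      infer_instance
    -- transport pdLE a K1 to pdLE a K1'
    have eK1 : ↥K1 ≃ₗ[R] ↥(LinearMap.ker g) :=
      (LinearEquiv.ofInjective f s1).trans (LinearEquiv.ofEq _ _ s3)
    have eK1' : ↥K1' ≃ₗ[R] ↥(LinearMap.ker g') :=
      (LinearEquiv.ofInjective i' q5).trans (LinearEquiv.ofEq _ _ q6)
    have hpd1 : pdLE R a (ModuleCat.of R (↥(LinearMap.ker φ) × ↥(LinearMap.ker g'))) := by
      apply pdLE_congr (M := K1)
      · exact eK1.trans Eker
      · exact h4
    have hswap : pdLE R a (ModuleCat.of R (↥(LinearMap.ker g') × ↥(LinearMap.ker φ))) :=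
      pdLE_congr (LinearEquiv.prodComm R _ _) hpd1
    have hpdker : pdLE R a (ModuleCat.of R ↥(LinearMap.ker g')) :=
      pdLE_dropProj (A := ModuleCat.of R ↥(LinearMap.ker g'))
        (Q := ModuleCat.of R ↥(LinearMap.ker φ)) hkφfin hkφproj hswap
    have hpdK1' : pdLE R a K1' := pdLE_congr eK1'.symm hpdker
    exact ih hpdK1' q7

/-- Lower bound mechanism: if `pdLE a M` then the `(a+1+b)`-th minimal syzygy vanishes. -/
lemma aux_pd_bound {a b : ℕ} {M K : ModuleCat.{u} R} (h : pdLE R a M)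
    (hm : IsMinSyz R (a + 1 + b) M K) : Subsingleton ↥K := by
  have heq : a + 1 + b = a + (1 + b) := by omega
  rw [heq] at hm
  obtain ⟨Km, hm1, hm2⟩ := IsMinSyz_decomp hm
  obtain ⟨K2, hk1, hk2⟩ := IsMinSyz_decomp hm2
  have hproj : Module.Projective R ↥Km := aux_pdmin h hm1
  have hsub : Subsingleton ↥K2 := aux_minsyz_one_proj hproj hk1
  exact IsMinSyz_subsingleton hsub hk2

end PD

section Resol

variable {R : Type u} [CommRing R]

open Submodule LinearMap IsLocalRing RingTheory.Sequence

open scoped Pointwise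

/-- Conclusion of the vanishing lemma at degree `j`. -/
def VC (F : ℕ → ModuleCat.{u} R) (d : ∀ i : ℕ, (F (i+1) : Type u) →ₗ[R] F i)
    (C : Type u) [AddCommGroup C] [Module R C] :
    ∀ (j : ℕ), ((F j : Type u) →ₗ[R] C) → Prop
  | 0, φ => φ = 0
  | (j'+1), φ => ∃ ψ : (F j' : Type u) →ₗ[R] C, φ = ψ ∘ₗ d j'

variable {L : ModuleCat.{u} R} {F : ℕ → ModuleCat.{u} R}
variable {d : ∀ i : ℕ, (F (i+1) : Type u) →ₗ[R] F i} {e : (F 0 : Type u) →ₗ[R] L}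

/-- Multiplication by an element of the annihilator is null-homotopic on a resolution. -/
lemma aux_homotopy (hFproj : ∀ i, Module.Projective R (F i))
    (hex0 : LinearMap.range (d 0) = LinearMap.ker e)
    (hex : ∀ i, LinearMap.range (d (i+1)) = LinearMap.ker (d i))
    (z : R) (hz : ∀ l : ↥L, z • l = 0) :
    ∃ s : ∀ i, (F i : Type u) →ₗ[R] F (i+1),
      (d 0 ∘ₗ s 0 = z • LinearMap.id) ∧
      ∀ i, d (i+1) ∘ₗ s (i+1) + s i ∘ₗ d i = z • LinearMap.id := by
  haveI := hFproj 0
  have hz0 : ∀ x : (F 0 : Type u),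
      (z • (LinearMap.id : (F 0 : Type u) →ₗ[R] F 0)) x ∈ LinearMap.range (d 0) := by
    intro x
    rw [hex0, LinearMap.mem_ker]
    show e (z • x) = 0
    rw [map_smul]
    exact hz (e x)
  obtain ⟨s0, hs0⟩ := Module.projective_lifting_property ((d 0).rangeRestrict)
    ((z • (LinearMap.id : (F 0 : Type u) →ₗ[R] F 0)).codRestrict
      (LinearMap.range (d 0)) hz0)
    (d 0).surjective_rangeRestrict
  have hs0' : d 0 ∘ₗ s0 = z • LinearMap.id := by
    apply LinearMap.ext
    intro x
    have h1 := congrArg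
      (fun (h : (F 0 : Type u) →ₗ[R] ↥(LinearMap.range (d 0))) =>
        ((h x : ↥(LinearMap.range (d 0))) : (F 0 : Type u))) hs0
    exact h1
  have key : ∀ (i : ℕ) (sp : (F i : Type u) →ₗ[R] F (i+1)),
      ((z • LinearMap.id - d i ∘ₗ sp) ∘ₗ d i = 0) →
      ∃ sn : (F (i+1) : Type u) →ₗ[R] F (i+2),
        d (i+1) ∘ₗ sn = z • LinearMap.id - sp ∘ₗ d i ∧
        (z • LinearMap.id - d (i+1) ∘ₗ sn) ∘ₗ d (i+1) = 0 := by
    intro i sp hsp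
    haveI := hFproj (i+1)
    have hτmem : ∀ x : (F (i+1) : Type u),
        (z • (LinearMap.id : (F (i+1) : Type u) →ₗ[R] F (i+1)) - sp ∘ₗ d i) x
          ∈ LinearMap.range (d (i+1)) := by
      intro x
      rw [hex i, LinearMap.mem_ker]
      have h2 : d i ((z • (LinearMap.id : (F (i+1) : Type u) →ₗ[R] F (i+1)) - sp ∘ₗ d i) x)
          = ((z • LinearMap.id - d i ∘ₗ sp) ∘ₗ d i) x := by
        show d i (z • x - sp (d i x)) = z • (d i x) - d i (sp (d i x))
        rw [map_sub, map_smul]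
      rw [h2, hsp]
      rfl
    obtain ⟨sn, hsn⟩ := Module.projective_lifting_property ((d (i+1)).rangeRestrict)
      (((z • (LinearMap.id : (F (i+1) : Type u) →ₗ[R] F (i+1)) - sp ∘ₗ d i)).codRestrict
        (LinearMap.range (d (i+1))) hτmem)
      (d (i+1)).surjective_rangeRestrict
    have hv : ∀ x, d (i+1) (sn x)
        = (z • (LinearMap.id : (F (i+1) : Type u) →ₗ[R] F (i+1)) - sp ∘ₗ d i) x := by
      intro x
      have h1 := congrArg
        (fun (h : (F (i+1) : Type u) →ₗ[R] ↥(LinearMap.range (d (i+1)))) =>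
          ((h x : ↥(LinearMap.range (d (i+1)))) : (F (i+1) : Type u))) hsn
      exact h1
    refine ⟨sn, LinearMap.ext (fun x => hv x), ?_⟩
    apply LinearMap.ext
    intro x
    have hd0 : d i (d (i+1) x) = 0 := by
      have : d (i+1) x ∈ LinearMap.ker (d i) := (hex i) ▸ LinearMap.mem_range_self _ x
      exact this
    show z • (d (i+1) x) - d (i+1) (sn (d (i+1) x)) = 0
    rw [hv]
    show z • (d (i+1) x) - (z • (d (i+1) x) - sp (d i (d (i+1) x))) = 0
    rw [hd0, map_zero, sub_zero, sub_self]
  have hbase : (z • (LinearMap.id : (F 0 : Type u) →ₗ[R] F 0) - d 0 ∘ₗ s0) ∘ₗ d 0 = 0 := by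
    rw [hs0', sub_self, LinearMap.zero_comp]
  let Motive : ℕ → Type u := fun i =>
    {si : (F i : Type u) →ₗ[R] F (i+1) // (z • LinearMap.id - d i ∘ₗ si) ∘ₗ d i = 0}
  let step : ∀ i, Motive i → Motive (i+1) := fun i p =>
    ⟨(key i p.1 p.2).choose, ((key i p.1 p.2).choose_spec).2⟩
  let sfun : ∀ i, Motive i := fun i => Nat.rec ⟨s0, hbase⟩ step i
  refine ⟨fun i => (sfun i).1, hs0', ?_⟩
  intro i
  have hspec := (key i (sfun i).1 (sfun i).2).choose_spec.1
  have hred : (sfun (i+1)).1 = (key i (sfun i).1 (sfun i).2).choose := rfl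
  show d (i+1) ∘ₗ (sfun (i+1)).1 + (sfun i).1 ∘ₗ d i = z • LinearMap.id
  rw [hred, hspec]
  abel

/-- The key vanishing lemma: cocycles on the resolution with values in a module with a
weakly regular sequence of sufficient length are coboundaries. -/
lemma aux_vanish [IsLocalRing R] (hFproj : ∀ i, Module.Projective R (F i))
    (hex0 : LinearMap.range (d 0) = LinearMap.ker e)
    (hex : ∀ i, LinearMap.range (d (i+1)) = LinearMap.ker (d i))
    (k : ℕ) (hk : ∀ y ∈ (maximalIdeal R) ^ k, ∀ l : ↥L, y • l = 0)
    (rs : List R) :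
    ∀ (C : Type u) [AddCommGroup C] [Module R C],
      (∀ r ∈ rs, r ∈ maximalIdeal R) → IsWeaklyRegular C rs →
      ∀ j, j < rs.length → ∀ φ : (F j : Type u) →ₗ[R] C, φ ∘ₗ d j = 0 →
        VC F d C j φ := by
  induction rs with
  | nil =>
    intro C _ _ _ _ j hj
    exact absurd hj (by simp)
  | cons y rs' ih =>
    intro C iC mC hmem hreg j hj φ hφ
    have hymem : y ∈ maximalIdeal R := hmem y List.mem_cons_self
    have hz : ∀ l : ↥L, (y ^ k) • l = 0 := fun l => hk (y ^ k) (Ideal.pow_mem_pow hymem k) l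
    obtain ⟨s, hs0, hsS⟩ := aux_homotopy hFproj hex0 hex (y ^ k) hz
    obtain ⟨hy, hreg'⟩ := (isWeaklyRegular_cons_iff C y rs').mp hreg
    have hmem' : ∀ r ∈ rs', r ∈ maximalIdeal R :=
      fun r hr => hmem r (List.mem_cons_of_mem y hr)
    -- division by y
    have hdiv : ∀ (j0 : ℕ) (ψ : (F j0 : Type u) →ₗ[R] C),
        (∀ x, ψ x ∈ y • (⊤ : Submodule R C)) →
        ∃ σ : (F j0 : Type u) →ₗ[R] C, ∀ x, ψ x = y • σ x := by
      intro j0 ψ hψ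
      set μ : C →ₗ[R] C := y • LinearMap.id with hμ
      have hinj : Function.Injective μ := fun a b hab => hy hab
      have hmemr : ∀ x, ψ x ∈ LinearMap.range μ := by
        intro x
        obtain ⟨c, -, hc⟩ := hψ x
        exact ⟨c, hc⟩
      set E := LinearEquiv.ofInjective μ hinj with hE
      refine ⟨E.symm.toLinearMap ∘ₗ ψ.codRestrict (LinearMap.range μ) hmemr, fun x => ?_⟩
      have h1 := congrArg (Subtype.val)
        (E.apply_symm_apply (ψ.codRestrict (LinearMap.range μ) hmemr x))
      exact h1.symm
    -- descent on powers of y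
    have hdesc : ∀ (a : ℕ) (j' : ℕ), j' < rs'.length →
        ∀ (φ : (F (j'+1) : Type u) →ₗ[R] C), φ ∘ₗ d (j'+1) = 0 →
        (∃ ψ : (F j' : Type u) →ₗ[R] C, (y ^ a) • φ = ψ ∘ₗ d j') →
        ∃ ψ' : (F j' : Type u) →ₗ[R] C, φ = ψ' ∘ₗ d j' := by
      intro a
      induction a with
      | zero =>
        rintro j' hj' φ hφc ⟨ψ, hψ⟩
        exact ⟨ψ, by rwa [pow_zero, one_smul] at hψ⟩
      | succ a iha =>
        rintro j' hj' φ hφc ⟨ψ, hψ⟩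
        have hψapp : ∀ x, ψ (d j' x) = (y ^ (a+1)) • φ x := by
          intro x
          exact (congrArg (fun h => h x) hψ).symm
        have hpow : ∀ c : C, (y ^ (a+1)) • c = y • ((y ^ a) • c) := by
          intro c
          rw [← mul_smul, ← pow_succ']
        let π : C →ₗ[R] QuotSMulTop y C := (y • (⊤ : Submodule R C)).mkQ
        have hcoc : (π ∘ₗ ψ) ∘ₗ d j' = 0 := by
          apply LinearMap.ext
          intro x
          show π (ψ (d j' x)) = 0
          rw [hψapp, hpow]
          show Submodule.Quotient.mk (y • ((y ^ a) • φ x)) = (0 : QuotSMulTop y C)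
          rw [Submodule.Quotient.mk_eq_zero]
          exact Submodule.smul_mem_pointwise_smul _ y ⊤ Submodule.mem_top
        have hVC := ih (QuotSMulTop y C) hmem' hreg' j' hj' (π ∘ₗ ψ) hcoc
        cases j' with
        | zero =>
          have hψ0 : (π ∘ₗ ψ) = 0 := hVC
          have hmemy : ∀ x, ψ x ∈ y • (⊤ : Submodule R C) := by
            intro x
            have : π (ψ x) = 0 := congrArg (fun h => h x) hψ0
            rwa [← Submodule.Quotient.mk_eq_zero (y • (⊤ : Submodule R C))]
          obtain ⟨σ, hσ⟩ := hdiv 0 ψ hmemy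
          apply iha 0 hj' φ hφc
          refine ⟨σ, LinearMap.ext (fun x => ?_)⟩
          have h1 : (y ^ (a+1)) • φ x = ψ (d 0 x) := (hψapp x).symm
          rw [hpow] at h1
          have h2 : ψ (d 0 x) = y • σ (d 0 x) := hσ (d 0 x)
          rw [h2] at h1
          exact hy h1
        | succ j'' =>
          obtain ⟨τbar, hτbar⟩ := hVC
          haveI := hFproj j''
          obtain ⟨τ, hτ⟩ := Module.projective_lifting_property π τbar
            (Submodule.mkQ_surjective _)
          have hτapp : ∀ x, π (τ x) = τbar x := fun x => congrArg (fun h => h x) hτ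
          have hmemy : ∀ x, (ψ - τ ∘ₗ d j'') x ∈ y • (⊤ : Submodule R C) := by
            intro x
            have h1 : π (ψ x) = τbar (d j'' x) := congrArg (fun h => h x) hτbar
            have : π (ψ x - τ (d j'' x)) = 0 := by
              rw [map_sub, h1, hτapp, sub_self]
            rwa [← Submodule.Quotient.mk_eq_zero (y • (⊤ : Submodule R C))]
          obtain ⟨σ, hσ⟩ := hdiv (j''+1) (ψ - τ ∘ₗ d j'') hmemy
          apply iha (j''+1) hj' φ hφc
          refine ⟨σ, LinearMap.ext (fun x => ?_)⟩
          have hd2 : d j'' (d (j''+1) x) = 0 := by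
            have : d (j''+1) x ∈ LinearMap.ker (d j'') :=
              (hex j'') ▸ LinearMap.mem_range_self _ x
            exact this
          have h1 : ψ (d (j''+1) x) - τ (d j'' (d (j''+1) x)) = y • σ (d (j''+1) x) :=
            hσ (d (j''+1) x)
          rw [hd2, map_zero, sub_zero] at h1
          have h2 : (y ^ (a+1)) • φ x = ψ (d (j''+1) x) := (hψapp x).symm
          rw [hpow, h1] at h2
          exact hy h2
    -- main cases
    cases j with
    | zero =>
      show φ = 0
      apply LinearMap.ext
      intro x
      have h1 : (y ^ k) • φ x = 0 := by
        have h2 : (y ^ k) • φ x = φ ((y ^ k) • x) := (map_smul φ _ x).symm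
        have h3 : (y ^ k) • x = d 0 (s 0 x) := by
          have := congrArg (fun h => h x) hs0
          exact this.symm
        rw [h2, h3]
        exact congrArg (fun h => h (s 0 x)) hφ
      have hyk : IsSMulRegular C (y ^ k) := hy.pow k
      have : (y ^ k) • φ x = (y ^ k) • (0 : C) := by rw [h1, smul_zero]
      exact hyk this
    | succ j' =>
      have hj'' : j' < rs'.length := by
        have : j' + 1 < rs'.length + 1 := by simpa using hj
        omega
      show ∃ ψ : (F j' : Type u) →ₗ[R] C, φ = ψ ∘ₗ d j'
      apply hdesc k j' hj'' φ hφ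
      refine ⟨φ ∘ₗ s j', LinearMap.ext (fun x => ?_)⟩
      have h1 : (y ^ k) • x = d (j'+1) (s (j'+1) x) + s j' (d j' x) := by
        have := congrArg (fun h => h x) (hsS j')
        exact this.symm
      have h2 : ((y ^ k) • φ) x = φ ((y ^ k) • x) := by
        show (y ^ k) • φ x = φ ((y ^ k) • x)
        rw [map_smul]
      rw [h2, h1, map_add]
      have h3 : φ (d (j'+1) (s (j'+1) x)) = 0 := congrArg (fun h => h (s (j'+1) x)) hφ
      rw [h3, zero_add]
      rfl

variable [IsLocalRing R]

/-- Some power of the maximal ideal annihilates a finite length module. -/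
lemma aux_ann_pow {M : Type u} [AddCommGroup M] [Module R M]
    (hNoeth : IsNoetherian R M) (hArt : IsArtinian R M) :
    ∃ k : ℕ, ∀ y ∈ (maximalIdeal R) ^ k, ∀ l : M, y • l = 0 := by
  let f : ℕ →o (Submodule R M)ᵒᵈ :=
    ⟨fun n => OrderDual.toDual ((maximalIdeal R) ^ n • (⊤ : Submodule R M)),
     fun a b hab => Submodule.smul_mono_left (Ideal.pow_le_pow_right hab)⟩
  obtain ⟨N, hN⟩ := IsArtinian.monotone_stabilizes f
  have hstab : (maximalIdeal R) ^ (N+1) • (⊤ : Submodule R M)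
      = (maximalIdeal R) ^ N • (⊤ : Submodule R M) := by
    have := hN (N+1) (by omega)
    exact congrArg OrderDual.ofDual this.symm
  have hIN : (maximalIdeal R) • ((maximalIdeal R) ^ N • (⊤ : Submodule R M))
      = (maximalIdeal R) ^ (N+1) • (⊤ : Submodule R M) := by
    rw [← Submodule.smul_assoc, Ideal.smul_eq_mul, ← pow_succ']
  have hle : (maximalIdeal R) ^ N • (⊤ : Submodule R M)
      ≤ (maximalIdeal R) • ((maximalIdeal R) ^ N • (⊤ : Submodule R M)) := by
    rw [hIN, hstab]
  have hbot := aux_nakayama _ (IsNoetherian.noetherian _) hle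
  refine ⟨N, fun y hy l => ?_⟩
  have hmem : y • l ∈ (maximalIdeal R) ^ N • (⊤ : Submodule R M) :=
    Submodule.smul_mem_smul hy Submodule.mem_top
  rw [hbot] at hmem
  exact (Submodule.mem_bot R).mp hmem

/-- Extraction of a weakly regular sequence of length `t` from the depth hypothesis. -/
lemma aux_exists_regseq (t : ℕ) (htpos : 0 < t)
    (hdepth : depthE R (maximalIdeal R) R = (t : ℕ∞)) :
    ∃ rs : List R, (∀ r ∈ rs, r ∈ maximalIdeal R) ∧ IsWeaklyRegular R rs ∧
      rs.length = t := by
  classical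
  set S : Set ℕ∞ := {x : ℕ∞ | ∃ rs : List R, (∀ r ∈ rs, r ∈ maximalIdeal R) ∧
    RingTheory.Sequence.IsWeaklyRegular R rs ∧ x = rs.length} with hS
  have hsup : sSup S = (t : ℕ∞) := hdepth
  by_cases hin : (t : ℕ∞) ∈ S
  · obtain ⟨rs, h1, h2, h3⟩ := hin
    exact ⟨rs, h1, h2, by exact_mod_cast h3.symm⟩
  · exfalso
    have hub : ∀ x ∈ S, x ≤ ((t - 1 : ℕ) : ℕ∞) := by
      intro x hx
      have hle : x ≤ (t : ℕ∞) := hsup ▸ le_sSup hx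
      have hne : x ≠ (t : ℕ∞) := fun h => hin (h ▸ hx)
      obtain ⟨rs, -, -, hlen⟩ := hx
      rw [hlen] at hle hne ⊢
      have : rs.length ≠ t := fun h => hne (by exact_mod_cast h)
      have hlt : rs.length ≤ t := by exact_mod_cast hle
      exact_mod_cast (by omega : rs.length ≤ t - 1)
    have : sSup S ≤ ((t - 1 : ℕ) : ℕ∞) := sSup_le hub
    rw [hsup] at this
    have : t ≤ t - 1 := by exact_mod_cast this
    omega

/-- Minimality passes to the dualized maps. -/
lemma aux_dual_min {A B : Type u} [AddCommGroup A] [Module R A]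
    [AddCommGroup B] [Module R B] [Module.Finite R B] [Module.Free R B]
    (f : B →ₗ[R] A) (hmin : LinearMap.range f ≤ (maximalIdeal R) • ⊤) :
    LinearMap.range f.dualMap ≤
      (maximalIdeal R) • (⊤ : Submodule R (Module.Dual R B)) := by
  rintro _ ⟨φ, rfl⟩
  have hφm : ∀ v ∈ (maximalIdeal R) • (⊤ : Submodule R A), φ v ∈ maximalIdeal R := by
    intro v hv
    refine Submodule.smul_induction_on hv ?_ ?_
    · intro r hr x _
      rw [map_smul, smul_eq_mul]
      exact Ideal.mul_mem_right _ _ hr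
    · intro x y hx hy
      rw [map_add]
      exact Ideal.add_mem _ hx hy
  let b := Module.Free.chooseBasis R B
  rw [← b.sum_dual_apply_smul_coord (f.dualMap φ)]
  apply Submodule.sum_mem
  intro c _
  refine Submodule.smul_mem_smul ?_ Submodule.mem_top
  show φ (f (b c)) ∈ maximalIdeal R
  exact hφm _ (hmin (LinearMap.mem_range_self f (b c)))

/-- The dual of a nontrivial finite free module is nontrivial. -/
lemma aux_dual_nontrivial {B : Type u} [AddCommGroup B] [Module R B]
    [Module.Finite R B] [Module.Free R B] (hB : Nontrivial B) :
    Nontrivial (Module.Dual R B) := by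
  let b := Module.Free.chooseBasis R B
  have hne : Nonempty (Module.Free.ChooseBasisIndex R B) := by
    by_contra h
    haveI : IsEmpty (Module.Free.ChooseBasisIndex R B) := not_nonempty_iff.mp h
    have : Subsingleton B := Equiv.subsingleton b.repr.toEquiv
    exact (not_subsingleton_iff_nontrivial.mpr hB) this
  obtain ⟨i0⟩ := hne
  refine ⟨b.coord i0, 0, fun hcontra => ?_⟩
  have h1 : (b.coord i0) (b i0) = 0 := by rw [hcontra]; rfl
  rw [Module.Basis.coord_apply, Module.Basis.repr_self, Finsupp.single_eq_same] at h1
  exact one_ne_zero h1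

end Resol

set_option maxHeartbeats 1600000

/-- Lemma 2.4: over a local ring of depth `t > 0`, if `L ≠ 0` has finite length,
`0 ≤ n < t` and `F` is a minimal free resolution of `L`, then the dualized sequence
`0 → F_0^* → ⋯ → F_{n+1}^* → Tr Ω^n L → 0` is exact and is a minimal free resolution of
`Tr Ω^n L`; consequently `Ω^i Tr Ω^n L ≅ Tr Ω^{n-i} L` for `0 ≤ i ≤ n`,
`Ω^{n+1} Tr Ω^n L ≅ F_0^*`, `Ω^i Tr Ω^n L = 0` for `i ≥ n+2`, and
`pd (Tr Ω^n L) = n + 1`. -/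
theorem dual_of_minimal_resolution [IsNoetherianRing R] [IsLocalRing R]
    (t : ℕ) (hdepth : depthE R (IsLocalRing.maximalIdeal R) R = (t : ℕ∞)) (htpos : 0 < t)
    (L : ModuleCat.{u} R) (hL : Nontrivial L) (hlen : IsFiniteLength R L)
    (n : ℕ) (hn : n < t)
    (F : ℕ → ModuleCat.{u} R) (d : ∀ i : ℕ, (F (i+1) : Type u) →ₗ[R] F i)
    (e : (F 0 : Type u) →ₗ[R] L)
    (hFfin : ∀ i, Module.Finite R (F i)) (hFfree : ∀ i, Module.Free R (F i))
    (he : Function.Surjective e) (hex0 : LinearMap.range (d 0) = LinearMap.ker e)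
    (hex : ∀ i, LinearMap.range (d (i+1)) = LinearMap.ker (d i))
    (hmin : ∀ i, LinearMap.range (d i) ≤
      (IsLocalRing.maximalIdeal R) • (⊤ : Submodule R (F i)))
    (T : ModuleCat.{u} R)
    (hT : T = ModuleCat.of R ((Module.Dual R (F (n+1))) ⧸ LinearMap.range ((d n).dualMap))) :
    (Function.Injective ((d 0).dualMap)) ∧
    (∀ i : ℕ, i < n →
      LinearMap.range ((d i).dualMap) = LinearMap.ker ((d (i+1)).dualMap)) ∧
    (∀ i : ℕ, i ≤ n → LinearMap.range ((d i).dualMap) ≤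
      (IsLocalRing.maximalIdeal R) • (⊤ : Submodule R (Module.Dual R (F (i+1))))) ∧
    (IsTrOmega R n L T) ∧
    (∀ i : ℕ, i ≤ n → ∀ K : ModuleCat.{u} R, IsMinSyz R i T K →
      IsTrOmega R (n - i) L K) ∧
    (∀ K : ModuleCat.{u} R, IsMinSyz R (n+1) T K →
      Nonempty (K ≃ₗ[R] Module.Dual R (F 0))) ∧
    (∀ i : ℕ, n + 2 ≤ i → ∀ K : ModuleCat.{u} R, IsMinSyz R i T K → Subsingleton K) ∧
    (pdim R T = (((n + 1 : ℕ) : ℕ∞) : WithBot ℕ∞)) := by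
  classical
  subst hT
  have hFproj : ∀ i, Module.Projective R (F i) := fun i => by
    haveI := hFfree i; infer_instance
  -- annihilator power
  have hfl := (isFiniteLength_iff_isNoetherian_isArtinian).mp hlen
  obtain ⟨k, hk⟩ := aux_ann_pow (R := R) (M := ↥L) hfl.1 hfl.2
  -- regular sequence
  obtain ⟨rs, hrsm, hrsreg, hrslen⟩ := aux_exists_regseq t htpos hdepth
  have hvan := aux_vanish (e := e) hFproj hex0 hex k hk rs R hrsm hrsreg
  have hvan' : ∀ j, j < t → ∀ φ : Module.Dual R ↥(F j), φ ∘ₗ d j = 0 → VC F d R j φ :=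
    fun j hj φ hφ => hvan j (by rw [hrslen]; exact hj) φ hφ
  -- d i ∘ d (i+1) = 0
  have hdd : ∀ i, d i ∘ₗ d (i+1) = 0 := by
    intro i
    apply LinearMap.ext
    intro x
    have : d (i+1) x ∈ LinearMap.ker (d i) := (hex i) ▸ LinearMap.mem_range_self _ x
    exact this
  -- Conclusion 1 : injectivity of the first dual map
  have conc1 : Function.Injective ((d 0).dualMap) := by
    have hker : ∀ φ : Module.Dual R ↥(F 0), (d 0).dualMap φ = 0 → φ = 0 := by
      intro φ h0
      have hc : φ ∘ₗ d 0 = 0 := by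
        apply LinearMap.ext
        intro x
        have := congrArg (fun ψ : Module.Dual R ↥(F 1) => ψ x) h0
        simpa [LinearMap.dualMap_apply] using this
      exact hvan' 0 htpos φ hc
    intro a b hab
    have h1 : (d 0).dualMap (a - b) = 0 := by rw [map_sub, hab, sub_self]
    have h2 := hker _ h1
    rwa [sub_eq_zero] at h2
  -- Conclusion 2 : exactness of the dual complex
  have conc2 : ∀ i : ℕ, i < n →
      LinearMap.range ((d i).dualMap) = LinearMap.ker ((d (i+1)).dualMap) := by
    intro i hi
    apply le_antisymm
    · rintro _ ⟨ψ, rfl⟩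
      rw [LinearMap.mem_ker]
      apply LinearMap.ext
      intro x
      have h1 : d i (d (i+1) x) = 0 := congrArg (fun h => h x) (hdd i)
      simp [LinearMap.dualMap_apply, h1]
    · intro φ hφ
      have hc : φ ∘ₗ d (i+1) = 0 := by
        apply LinearMap.ext
        intro x
        have := congrArg (fun ψ : Module.Dual R ↥(F (i+2)) => ψ x) (LinearMap.mem_ker.mp hφ)
        simpa [LinearMap.dualMap_apply] using this
      obtain ⟨ψ, hψ⟩ := hvan' (i+1) (by omega) φ hc
      refine ⟨ψ, ?_⟩
      rw [hψ]
      apply LinearMap.ext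
      intro x
      simp [LinearMap.dualMap_apply]
  -- Conclusion 3 : minimality of the dual complex
  have conc3 : ∀ i : ℕ, i ≤ n → LinearMap.range ((d i).dualMap) ≤
      (IsLocalRing.maximalIdeal R) • (⊤ : Submodule R (Module.Dual R (F (i+1)))) := by
    intro i _
    haveI := hFfin (i+1); haveI := hFfree (i+1)
    exact aux_dual_min (d i) (hmin i)
  -- nontriviality of F 0 and its dual
  have hF0 : Nontrivial ↥(F 0) := by
    obtain ⟨a, b, hab⟩ := hL
    obtain ⟨x, hx⟩ := he a
    obtain ⟨y, hy⟩ := he b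
    exact ⟨x, y, fun h => hab (by rw [← hx, ← hy, h])⟩
  have hdual0 : Nontrivial (Module.Dual R ↥(F 0)) := by
    haveI := hFfin 0; haveI := hFfree 0
    exact aux_dual_nontrivial hF0
  -- syzygy chain of L
  let SyzL : ℕ → ModuleCat.{u} R := fun i => match i with
    | 0 => L
    | (i+1) => ModuleCat.of R ↥(LinearMap.range (d i))
  let cL : ∀ i, (F i : Type u) →ₗ[R] ↥(SyzL i) := fun i => match i with
    | 0 => e
    | (i+1) => (d i).rangeRestrict
  have hcsurj : ∀ i, Function.Surjective (cL i) := by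
    intro i
    cases i with
    | zero => exact he
    | succ i => exact (d i).surjective_rangeRestrict
  have hcker : ∀ i, LinearMap.ker (cL i) = LinearMap.range (d i) := by
    intro i
    cases i with
    | zero => exact hex0.symm
    | succ i => rw [LinearMap.ker_rangeRestrict]; exact (hex i).symm
  have hckerle : ∀ i, LinearMap.ker (cL i) ≤
      (IsLocalRing.maximalIdeal R) • (⊤ : Submodule R ↥(F i)) := by
    intro i
    rw [hcker i]
    exact hmin i
  have minsyzL : ∀ (b a : ℕ), IsMinSyz R b (SyzL a) (SyzL (a + b)) := by
    intro b
    induction b with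
    | zero => intro a; exact ⟨LinearEquiv.refl R _⟩
    | succ b ihb =>
      intro a
      have heq : a + (b+1) = (a+1) + b := by omega
      rw [heq]
      exact ⟨F a, cL a, SyzL (a+1), (LinearMap.range (d a)).subtype, hFfin a, hFfree a,
        hcsurj a, hckerle a, Submodule.injective_subtype _,
        by rw [Submodule.range_subtype, hcker a], ihb (a+1)⟩
  -- transpose helper
  have htrans : ∀ (j : ℕ) (K : ModuleCat.{u} R),
      Nonempty (↥K ≃ₗ[R] ((Module.Dual R ↥(F (j+1))) ⧸ LinearMap.range ((d j).dualMap))) →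
      IsTrOmega R j L K := by
    intro j K hiso
    refine ⟨SyzL j, ?_, ?_⟩
    · have := minsyzL j 0
      rw [Nat.zero_add] at this
      exact this
    · refine ⟨F (j+1), F j, d j, cL j, hFfin j, hFfree j, hFfin (j+1), hFfree (j+1),
        hcsurj j, (hcker j).symm, hckerle j, ?_, hiso⟩
      rw [show LinearMap.ker (d j) = LinearMap.range (d (j+1)) from (hex j).symm]
      exact hmin (j+1)
  have conc4 : IsTrOmega R n L
      (ModuleCat.of R ((Module.Dual R (F (n+1))) ⧸ LinearMap.range ((d n).dualMap))) :=
    htrans n _ ⟨LinearEquiv.refl R _⟩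
  -- syzygy chain of T
  have stepT : ∀ w : ℕ, w < n →
      IsMinSyz R 1 (ModuleCat.of R ↥(LinearMap.range ((d (w+1)).dualMap)))
        (ModuleCat.of R ↥(LinearMap.range ((d w).dualMap))) := by
    intro w hw
    haveI := hFfin (w+1); haveI := hFfree (w+1)
    refine ⟨ModuleCat.of R (Module.Dual R ↥(F (w+1))), ((d (w+1)).dualMap).rangeRestrict,
      ModuleCat.of R ↥(LinearMap.range ((d w).dualMap)),
      (LinearMap.range ((d w).dualMap)).subtype,
      (inferInstance : Module.Finite R (Module.Dual R ↥(F (w+1)))),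
      (inferInstance : Module.Free R (Module.Dual R ↥(F (w+1)))),
      LinearMap.surjective_rangeRestrict _, ?_, Submodule.injective_subtype _, ?_,
      ⟨LinearEquiv.refl R _⟩⟩
    · rw [LinearMap.ker_rangeRestrict, ← conc2 w hw]
      exact conc3 w (by omega)
    · rw [Submodule.range_subtype, LinearMap.ker_rangeRestrict, ← conc2 w hw]
  have minsyzT : ∀ j : ℕ, 1 ≤ j → j ≤ n+1 →
      IsMinSyz R j (ModuleCat.of R ((Module.Dual R (F (n+1))) ⧸
          LinearMap.range ((d n).dualMap)))
        (ModuleCat.of R ↥(LinearMap.range ((d (n+1-j)).dualMap))) := by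
    intro j
    induction j with
    | zero => intro h; omega
    | succ j ihj =>
      intro _ hj1
      cases Nat.eq_zero_or_pos j with
      | inl h0 =>
        subst h0
        have hidx : n + 1 - 1 = n := by omega
        rw [hidx]
        haveI := hFfin (n+1); haveI := hFfree (n+1)
        exact ⟨ModuleCat.of R (Module.Dual R ↥(F (n+1))),
          (LinearMap.range ((d n).dualMap)).mkQ,
          ModuleCat.of R ↥(LinearMap.range ((d n).dualMap)),
          (LinearMap.range ((d n).dualMap)).subtype,
          (inferInstance : Module.Finite R (Module.Dual R ↥(F (n+1)))),
          (inferInstance : Module.Free R (Module.Dual R ↥(F (n+1)))),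
          Submodule.mkQ_surjective _,
          by rw [Submodule.ker_mkQ]; exact conc3 n le_rfl,
          Submodule.injective_subtype _,
          by rw [Submodule.range_subtype, Submodule.ker_mkQ],
          ⟨LinearEquiv.refl R _⟩⟩
      | inr hpos =>
        have prev := ihj hpos (by omega)
        have h4 : n + 1 - j = (n - j) + 1 := by omega
        rw [h4] at prev
        have st := stepT (n - j) (by omega)
        have hcat := IsMinSyz_concat prev st
        have h3 : n + 1 - (j + 1) = n - j := by omega
        rw [h3]
        exact hcat
  -- the trivial extra step
  have stepT0 : IsMinSyz R 1 (ModuleCat.of R ↥(LinearMap.range ((d 0).dualMap)))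
      (ModuleCat.of R ↥(⊥ : Submodule R (Module.Dual R ↥(F 0)))) := by
    haveI := hFfin 0; haveI := hFfree 0
    refine ⟨ModuleCat.of R (Module.Dual R ↥(F 0)), ((d 0).dualMap).rangeRestrict,
      ModuleCat.of R ↥(⊥ : Submodule R (Module.Dual R ↥(F 0))),
      (⊥ : Submodule R (Module.Dual R ↥(F 0))).subtype,
      (inferInstance : Module.Finite R (Module.Dual R ↥(F 0))),
      (inferInstance : Module.Free R (Module.Dual R ↥(F 0))),
      LinearMap.surjective_rangeRestrict _, ?_, Submodule.injective_subtype _, ?_,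
      ⟨LinearEquiv.refl R _⟩⟩
    · rw [LinearMap.ker_rangeRestrict, LinearMap.ker_eq_bot.mpr conc1]
      exact bot_le
    · rw [Submodule.range_subtype, LinearMap.ker_rangeRestrict,
        LinearMap.ker_eq_bot.mpr conc1]
  have hWn1 : IsMinSyz R (n+1) (ModuleCat.of R ((Module.Dual R (F (n+1))) ⧸
      LinearMap.range ((d n).dualMap)))
      (ModuleCat.of R ↥(LinearMap.range ((d 0).dualMap))) := by
    have := minsyzT (n+1) (by omega) le_rfl
    have h0 : n + 1 - (n + 1) = 0 := by omega
    rw [h0] at this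
    exact this
  have minsyzT2 : IsMinSyz R (n+2) (ModuleCat.of R ((Module.Dual R (F (n+1))) ⧸
      LinearMap.range ((d n).dualMap)))
      (ModuleCat.of R ↥(⊥ : Submodule R (Module.Dual R ↥(F 0)))) := by
    have := IsMinSyz_concat hWn1 stepT0
    exact this
  have hZsub : Subsingleton ↥(ModuleCat.of R ↥(⊥ : Submodule R (Module.Dual R ↥(F 0)))) := by
    constructor
    rintro ⟨a, ha⟩ ⟨b, hb⟩
    have ha' : a = 0 := (Submodule.mem_bot R).mp ha
    have hb' : b = 0 := (Submodule.mem_bot R).mp hb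
    refine Subtype.ext ?_
    show a = b
    rw [ha', hb']
  have hrange0 : Nontrivial ↥(LinearMap.range ((d 0).dualMap)) := by
    haveI := hdual0
    exact Equiv.nontrivial (LinearEquiv.ofInjective ((d 0).dualMap) conc1).symm.toEquiv
  -- Conclusion 5
  have conc5 : ∀ i : ℕ, i ≤ n → ∀ K : ModuleCat.{u} R,
      IsMinSyz R i (ModuleCat.of R ((Module.Dual R (F (n+1))) ⧸
        LinearMap.range ((d n).dualMap))) K → IsTrOmega R (n - i) L K := by
    intro i hi K hK
    cases Nat.eq_zero_or_pos i with
    | inl h0 =>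
      subst h0
      obtain ⟨eK⟩ := hK
      rw [Nat.sub_zero]
      exact htrans n K ⟨eK⟩
    | inr hpos =>
      have hws := minsyzT i hpos (by omega)
      obtain ⟨eK⟩ := IsMinSyz_unique hK hws
      have h4 : n + 1 - i = (n - i) + 1 := by omega
      rw [h4] at eK
      have e2 : ↥(LinearMap.range ((d ((n-i)+1)).dualMap)) ≃ₗ[R]
          ((Module.Dual R ↥(F ((n-i)+1))) ⧸ LinearMap.range ((d (n-i)).dualMap)) := by
        have e3 := ((d ((n-i)+1)).dualMap).quotKerEquivRange
        rw [show LinearMap.ker ((d ((n-i)+1)).dualMap)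
            = LinearMap.range ((d (n-i)).dualMap) from (conc2 (n-i) (by omega)).symm] at e3
        exact e3.symm
      exact htrans (n-i) K ⟨eK.trans e2⟩
  -- Conclusion 6
  have conc6 : ∀ K : ModuleCat.{u} R,
      IsMinSyz R (n+1) (ModuleCat.of R ((Module.Dual R (F (n+1))) ⧸
        LinearMap.range ((d n).dualMap))) K →
      Nonempty (↥K ≃ₗ[R] Module.Dual R (F 0)) := by
    intro K hK
    obtain ⟨eK⟩ := IsMinSyz_unique hK hWn1
    exact ⟨eK.trans (LinearEquiv.ofInjective ((d 0).dualMap) conc1).symm⟩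
  -- Conclusion 7
  have conc7 : ∀ i : ℕ, n + 2 ≤ i → ∀ K : ModuleCat.{u} R,
      IsMinSyz R i (ModuleCat.of R ((Module.Dual R (F (n+1))) ⧸
        LinearMap.range ((d n).dualMap))) K → Subsingleton ↥K := by
    intro i hi K hK
    have heq : i = (n+2) + (i - (n+2)) := by omega
    rw [heq] at hK
    obtain ⟨Km, h1, h2⟩ := IsMinSyz_decomp hK
    obtain ⟨eKm⟩ := IsMinSyz_unique h1 minsyzT2
    haveI := hZsub
    have hKm : Subsingleton ↥Km := Equiv.subsingleton eKm.toEquiv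
    exact IsMinSyz_subsingleton hKm h2
  -- Conclusion 8 : projective dimension
  have pdB : ∀ j : ℕ, j ≤ n →
      pdLE R j (ModuleCat.of R ↥(LinearMap.range ((d j).dualMap))) := by
    intro j
    induction j with
    | zero =>
      intro _
      haveI := hFfin 0; haveI := hFfree 0
      haveI : Module.Projective R (Module.Dual R ↥(F 0)) := inferInstance
      exact Module.Projective.of_equiv (LinearEquiv.ofInjective ((d 0).dualMap) conc1)
    | succ j ihj =>
      intro hj
      haveI := hFfin (j+1); haveI := hFfree (j+1)
      refine ⟨ModuleCat.of R ↥(LinearMap.range ((d j).dualMap)),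
        ModuleCat.of R (Module.Dual R ↥(F (j+1))),
        (LinearMap.range ((d j).dualMap)).subtype, ((d (j+1)).dualMap).rangeRestrict,
        (inferInstance : Module.Finite R (Module.Dual R ↥(F (j+1)))),
        (inferInstance : Module.Projective R (Module.Dual R ↥(F (j+1)))),
        ⟨Submodule.injective_subtype _, LinearMap.surjective_rangeRestrict _, ?_⟩,
        ihj (by omega)⟩
      rw [Submodule.range_subtype, LinearMap.ker_rangeRestrict, ← conc2 j (by omega)]
  have hpdT : pdLE R (n+1) (ModuleCat.of R ((Module.Dual R (F (n+1))) ⧸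
      LinearMap.range ((d n).dualMap))) := by
    haveI := hFfin (n+1); haveI := hFfree (n+1)
    exact ⟨ModuleCat.of R ↥(LinearMap.range ((d n).dualMap)),
      ModuleCat.of R (Module.Dual R ↥(F (n+1))),
      (LinearMap.range ((d n).dualMap)).subtype, (LinearMap.range ((d n).dualMap)).mkQ,
      (inferInstance : Module.Finite R (Module.Dual R ↥(F (n+1)))),
      (inferInstance : Module.Projective R (Module.Dual R ↥(F (n+1)))),
      ⟨Submodule.injective_subtype _, Submodule.mkQ_surjective _,
        by rw [Submodule.range_subtype, Submodule.ker_mkQ]⟩, pdB n le_rfl⟩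
  have conc8 : pdim R (ModuleCat.of R ((Module.Dual R (F (n+1))) ⧸
      LinearMap.range ((d n).dualMap))) = (((n + 1 : ℕ) : ℕ∞) : WithBot ℕ∞) := by
    simp only [pdim]
    apply le_antisymm
    · apply sInf_le
      exact Or.inr ⟨n+1, rfl, hpdT⟩
    · apply le_sInf
      rintro b (⟨rfl, hsub⟩ | ⟨m, rfl, hpdm⟩)
      · exfalso
        have := IsMinSyz_subsingleton hsub hWn1
        exact (not_subsingleton_iff_nontrivial.mpr hrange0) this
      · rw [WithBot.coe_le_coe, Nat.cast_le]
        by_contra hlt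
        have hmn : m ≤ n := by omega
        have h5 : m + 1 + (n - m) = n + 1 := by omega
        have hW2 : IsMinSyz R (m + 1 + (n - m))
            (ModuleCat.of R ((Module.Dual R (F (n+1))) ⧸ LinearMap.range ((d n).dualMap)))
            (ModuleCat.of R ↥(LinearMap.range ((d 0).dualMap))) := by
          rw [h5]
          exact hWn1
        have := aux_pd_bound hpdm hW2
        exact (not_subsingleton_iff_nontrivial.mpr hrange0) this
  exact ⟨conc1, conc2, conc3, conc4, conc5, conc6, conc7, conc8⟩


end ResolvPaper
end
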